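/- For every d ≥ 1 there exists a constant C(d) < ∞ with the following property. Let ω be a translation-invariant random subgraph of Z^d and, conditionally on ω, let (Y_i)_{i≥0} be a simple random walk started at the origin on the connected component of the origin in ω whenever the origin is a vertex of ω with at least one ω-neighbour, and set Y_i = 0 for all i ≥ 0 otherwise. Then E[ max_{0 ≤ i ≤ n} ‖Y_i‖_∞² ] ≤ C(d) · n for every n ≥ 1. (This is the diffusive maximal displacement bound obtained from the maximal Markov-type 2 inequality for R^d.) -/

import Mathlib

open MeasureTheory
open scoped ENNReal Classical

noncomputable section

namespace ArborealGas

/-- The degree of a vertex in a graph. -/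
def graphDeg {V : Type*} (G : SimpleGraph V) (v : V) : ℕ := (G.neighborSet v).ncard

/-- One-step transition probability of the simple random walk on `G`. -/
def stepProb {V : Type*} (G : SimpleGraph V) (a b : V) : ℝ≥0∞ :=
  if G.Adj a b then ((graphDeg G a : ℝ≥0∞))⁻¹ else 0

/-- `n`-step transition probabilities of the simple random walk on `G`. -/
def transN {V : Type*} (G : SimpleGraph V) : ℕ → V → V → ℝ≥0∞
  | 0 => fun a b => if a = b then 1 else 0
  | n + 1 => fun a b => ∑' c, transN G n a c * stepProb G c b

/-- `G` is transient: the expected number of visits of the simple random walk to its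
starting point is finite. -/
def Transient {V : Type*} (G : SimpleGraph V) : Prop :=
  ∀ v : V, (∑' n : ℕ, transN G n v v) ≠ ⊤

/-- The probability that a doubly-infinite simple random walk on `G` started at `u`
agrees with the path `x` on the time window `[-a, b]`. -/
def walkCylWeight {V : Type*} (G : SimpleGraph V) (u : V) (a b : ℕ) (x : ℤ → V) : ℝ≥0∞ :=
  (if x 0 = u then 1 else 0) *
    (∏ i ∈ Finset.range b, stepProb G (x (i : ℤ)) (x ((i : ℤ) + 1))) *
    (∏ i ∈ Finset.range a, stepProb G (x (-(i : ℤ))) (x (-(i : ℤ) - 1)))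

/-- `μ` is the joint law `P^G_{u,v}` of two independent doubly-infinite simple random walks
`X` and `Y` on `G` started at `u` and `v`, characterized by its cylinder probabilities. -/
def IsDoubleWalkLaw {V : Type*} [MeasurableSpace V] (G : SimpleGraph V) (u v : V)
    (μ : Measure ((ℤ → V) × (ℤ → V))) : Prop :=
  IsProbabilityMeasure μ ∧
  ∀ (a b c d : ℕ) (x y : ℤ → V),
    μ {ω | (∀ i : ℤ, -(a : ℤ) ≤ i → i ≤ (b : ℤ) → ω.1 i = x i) ∧
           (∀ j : ℤ, -(c : ℤ) ≤ j → j ≤ (d : ℤ) → ω.2 j = y j)}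
      = walkCylWeight G u a b x * walkCylWeight G v c d y

/-- The σ-algebra on the space of subgraphs of `G`: the product (cylinder) σ-algebra. -/
instance subgraphMeasurableSpace {V : Type*} (G : SimpleGraph V) :
    MeasurableSpace G.Subgraph :=
  MeasurableSpace.comap
    (fun S => ((fun v => v ∈ S.verts), S.Adj) :
      G.Subgraph → (V → Prop) × (V → V → Prop)) inferInstance

/-- The degree of a vertex inside a subgraph. -/
def subDeg {V : Type*} {G : SimpleGraph V} (S : G.Subgraph) (v : V) : ℕ :=
  {w | S.Adj v w}.ncard

/-- One-step transition probability of the simple random walk on the subgraph `S`. -/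
def stepIn {V : Type*} {G : SimpleGraph V} (S : G.Subgraph) (a b : V) : ℝ≥0∞ :=
  if S.Adj a b then ((subDeg S a : ℝ≥0∞))⁻¹ else 0

/-- The probability that the simple random walk on the subgraph `S` started at `v`
agrees with the path `x` on the time window `[0, n]`. -/
def srwCylIn {V : Type*} {G : SimpleGraph V} (S : G.Subgraph) (v : V) (n : ℕ)
    (x : ℕ → V) : ℝ≥0∞ :=
  (if x 0 = v then 1 else 0) * ∏ i ∈ Finset.range n, stepIn S (x i) (x (i + 1))

/-- `n`-step transition probabilities of the simple random walk on the subgraph `S`. -/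
def transNIn {V : Type*} {G : SimpleGraph V} (S : G.Subgraph) : ℕ → V → V → ℝ≥0∞
  | 0 => fun a b => if a = b then 1 else 0
  | n + 1 => fun a b => ∑' c, transNIn S n a c * stepIn S c b

/-- The Green's function of the simple random walk on the subgraph `S`. -/
def green {V : Type*} {G : SimpleGraph V} (S : G.Subgraph) (a b : V) : ℝ≥0∞ :=
  ∑' n : ℕ, transNIn S n a b

/-- The hypercubic lattice `ℤ^d`: vertices `Fin d → ℤ`, edges between points at
`ℓ¹`-distance one. -/
def ZdGraph (d : ℕ) : SimpleGraph (Fin d → ℤ) where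
  Adj x y := ∑ i, (x i - y i).natAbs = 1
  symm := by
    constructor
    intro x y h
    rw [← h]
    exact Finset.sum_congr rfl fun i _ => by omega
  loopless := by constructor; intro x h; simp at h

/-- Translation of subgraphs of `ℤ^d` by a lattice vector `t`. -/
def translateSub {d : ℕ} (t : Fin d → ℤ) (S : (ZdGraph d).Subgraph) :
    (ZdGraph d).Subgraph where
  verts := {v | v - t ∈ S.verts}
  Adj u v := S.Adj (u - t) (v - t)
  adj_sub := by
    intro u v h
    have h2 := S.adj_sub h
    simpa [ZdGraph, sub_sub_sub_cancel_right] using h2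
  edge_vert := by intro u v h; exact S.edge_vert h
  symm := ⟨fun _ _ h => S.symm.symm _ _ h⟩

/-- The subgraph of `G` induced by a set `I` of vertices. -/
def traceSub {V : Type*} (G : SimpleGraph V) (I : Set V) : G.Subgraph where
  verts := I
  Adj u v := G.Adj u v ∧ u ∈ I ∧ v ∈ I
  adj_sub h := h.1
  edge_vert h := h.2.1
  symm := ⟨fun _ _ h => ⟨h.1.symm, h.2.2, h.2.1⟩⟩

open Classical in
/-- The conditional cylinder probability, given the environment `S`, of the walk started at
the origin: if the origin has at least one `S`-neighbour this is the cylinder probability of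
the simple random walk on the component of the origin in `S`; otherwise the walk is frozen
at the origin. -/
def originCondCyl (d : ℕ) (S : (ZdGraph d).Subgraph) (n : ℕ)
    (x : ℕ → Fin d → ℤ) : ℝ≥0∞ :=
  if ∃ b, S.Adj 0 b then srwCylIn S 0 n x
  else if ∀ i ≤ n, x i = 0 then 1 else 0

/-- `μ` is the joint law of a random environment `ω` with law `P` together with (conditionally
on `ω`) a simple random walk started at the origin on the component of the origin in `ω`
(frozen at the origin if the origin has no `ω`-neighbour). -/
def IsEnvWalkLaw (d : ℕ) (P : Measure (ZdGraph d).Subgraph)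
    (μ : Measure ((ZdGraph d).Subgraph × (ℕ → Fin d → ℤ))) : Prop :=
  IsProbabilityMeasure μ ∧ μ.map Prod.fst = P ∧
  ∀ B : Set (ZdGraph d).Subgraph, MeasurableSet B → ∀ (n : ℕ) (x : ℕ → Fin d → ℤ),
    μ (B ×ˢ {ω | ∀ i ≤ n, ω i = x i}) = ∫⁻ S in B, originCondCyl d S n x ∂P

/-- The supremum norm `‖x‖_∞` of a point of `ℤ^d`. -/
def supNormZ {d : ℕ} (x : Fin d → ℤ) : ℕ := Finset.univ.sup fun j => (x j).natAbs

/-- `μ₂` is the joint law of two conditionally independent simple random walks on the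
subgraph `Γ`, both started at `v`, characterized by its cylinder probabilities. -/
def IsPairSRWOn {V : Type*} [MeasurableSpace V] {G : SimpleGraph V} (Γ : G.Subgraph)
    (v : V) (μ₂ : Measure ((ℕ → V) × (ℕ → V))) : Prop :=
  IsProbabilityMeasure μ₂ ∧
  ∀ (n m : ℕ) (x y : ℕ → V),
    μ₂ {ω | (∀ i ≤ n, ω.1 i = x i) ∧ (∀ j ≤ m, ω.2 j = y j)}
      = srwCylIn Γ v n x * srwCylIn Γ v m y


section Aux

open Finset

variable {d : ℕ}

private lemma adj_coord {u v : Fin d → ℤ} (h : (ZdGraph d).Adj u v) (j : Fin d) :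
    (u j - v j).natAbs ≤ 1 := by
  have h' : ∑ i, (u i - v i).natAbs = 1 := h
  calc (u j - v j).natAbs ≤ ∑ i, (u i - v i).natAbs :=
        Finset.single_le_sum (f := fun i => (u i - v i).natAbs) (fun i _ => Nat.zero_le _) (Finset.mem_univ j)
  _ = 1 := h'

def unitBox (d : ℕ) : Finset (Fin d → ℤ) := Fintype.piFinset fun _ => Finset.Icc (-1 : ℤ) 1

lemma mem_unitBox {e : Fin d → ℤ} : e ∈ unitBox d ↔ ∀ j, -1 ≤ e j ∧ e j ≤ 1 := by
  simp [unitBox, Fintype.mem_piFinset]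

lemma sub_mem_unitBox {u v : Fin d → ℤ} (h : (ZdGraph d).Adj u v) : v - u ∈ unitBox d := by
  rw [mem_unitBox]
  intro j
  have h2 := adj_coord h j
  simp only [Pi.sub_apply]
  omega

/-- The finset of neighbour-steps of `u` in `S`. -/
def nbrF (S : (ZdGraph d).Subgraph) (u : Fin d → ℤ) : Finset (Fin d → ℤ) :=
  (unitBox d).filter fun e => S.Adj u (u + e)

lemma subDeg_eq_card (S : (ZdGraph d).Subgraph) (u : Fin d → ℤ) :
    subDeg S u = (nbrF S u).card := by
  have hset : {w | S.Adj u w} = ↑((nbrF S u).image (fun e => u + e)) := by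
    ext w
    simp only [Set.mem_setOf_eq, Finset.coe_image, Set.mem_image, Finset.mem_coe, nbrF,
      Finset.mem_filter]
    constructor
    · intro h
      refine ⟨w - u, ⟨sub_mem_unitBox (S.adj_sub h), ?_⟩, by abel⟩
      simpa using h
    · rintro ⟨e, ⟨_, he⟩, rfl⟩
      exact he
  rw [subDeg, hset, Set.ncard_coe_finset, Finset.card_image_of_injective _ (fun a b h => by
    simpa using h)]

lemma subDeg_le_card (S : (ZdGraph d).Subgraph) (u : Fin d → ℤ) :
    subDeg S u ≤ (unitBox d).card := by
  rw [subDeg_eq_card]; exact Finset.card_filter_le _ _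

lemma one_le_subDeg {S : (ZdGraph d).Subgraph} {u v : Fin d → ℤ} (h : S.Adj u v) :
    1 ≤ subDeg S u := by
  rw [subDeg_eq_card]
  refine Finset.card_pos.2 ⟨v - u, ?_⟩
  simp only [nbrF, Finset.mem_filter]
  exact ⟨sub_mem_unitBox (S.adj_sub h), by simpa using h⟩

/-- Real-valued one-step transition probability. -/
def qR (S : (ZdGraph d).Subgraph) (u v : Fin d → ℤ) : ℝ :=
  if S.Adj u v then ((subDeg S u : ℝ))⁻¹ else 0

lemma qR_nonneg (S : (ZdGraph d).Subgraph) (u v : Fin d → ℤ) : 0 ≤ qR S u v := by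
  unfold qR; split
  · positivity
  · exact le_rfl

lemma qR_ne_zero_adj {S : (ZdGraph d).Subgraph} {u v : Fin d → ℤ} (h : qR S u v ≠ 0) :
    S.Adj u v := by
  by_contra hc; exact h (by simp [qR, hc])

lemma sum_qR_self (S : (ZdGraph d).Subgraph) (u : Fin d → ℤ) :
    ∑ e ∈ unitBox d, qR S u (u + e) = (subDeg S u : ℝ) * ((subDeg S u : ℝ))⁻¹ := by
  have h1 : ∑ e ∈ unitBox d, qR S u (u + e)
      = ∑ e ∈ nbrF S u, ((subDeg S u : ℝ))⁻¹ := by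
    rw [nbrF, Finset.sum_filter]
    exact Finset.sum_congr rfl fun e _ => rfl
  rw [h1, Finset.sum_const, nsmul_eq_mul, ← subDeg_eq_card]

lemma sum_qR_unit {S : (ZdGraph d).Subgraph} {u : Fin d → ℤ} (h : 1 ≤ subDeg S u) :
    ∑ e ∈ unitBox d, qR S u (u + e) = 1 := by
  rw [sum_qR_self]
  have h2 : (subDeg S u : ℝ) ≠ 0 := Nat.cast_ne_zero.mpr (by omega)
  field_simp

lemma sum_qR_le_one (S : (ZdGraph d).Subgraph) (u : Fin d → ℤ) :
    ∑ e ∈ unitBox d, qR S u (u + e) ≤ 1 := by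
  rw [sum_qR_self]
  rcases Nat.eq_zero_or_pos (subDeg S u) with h | h
  · simp [h]
  · have h2 : (subDeg S u : ℝ) ≠ 0 := Nat.cast_ne_zero.mpr (by omega)
    rw [mul_inv_cancel₀ h2]

lemma sum_qR_mul (S : (ZdGraph d).Subgraph) (u : Fin d → ℤ) {T : Finset (Fin d → ℤ)}
    (hT : ∀ v, S.Adj u v → v ∈ T) (g : (Fin d → ℤ) → ℝ) :
    ∑ v ∈ T, qR S u v * g v = ∑ e ∈ unitBox d, qR S u (u + e) * g (u + e) := by
  have h1 : ∑ v ∈ T, qR S u v * g v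
      = ∑ v ∈ T.filter (fun v => S.Adj u v), qR S u v * g v := by
    rw [Finset.sum_filter_of_ne]
    intro v _ hv
    by_contra hadj
    exact hv (by simp [qR, hadj])
  have h2 : ∑ e ∈ unitBox d, qR S u (u + e) * g (u + e)
      = ∑ e ∈ nbrF S u, qR S u (u + e) * g (u + e) := by
    rw [nbrF, Finset.sum_filter_of_ne]
    intro e _ he
    by_contra hadj
    exact he (by simp [qR, hadj])
  rw [h1, h2]
  refine Finset.sum_nbij' (i := fun v => v - u) (j := fun e => u + e) ?_ ?_ ?_ ?_ ?_
  · intro v hv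
    rw [Finset.mem_filter] at hv
    rw [nbrF, Finset.mem_filter]
    refine ⟨sub_mem_unitBox (S.adj_sub hv.2), ?_⟩
    simpa [add_sub_cancel] using hv.2
  · intro e he
    rw [nbrF, Finset.mem_filter] at he
    rw [Finset.mem_filter]
    exact ⟨hT _ he.2, he.2⟩
  · intro v _
    funext j; simp
  · intro e _
    funext j; simp
  · intro v hv
    have hv' : u + (v - u) = v := by funext j; simp
    rw [hv']

def phi (S : (ZdGraph d).Subgraph) (u : Fin d → ℤ) (j : Fin d) : ℝ :=
  ∑ e ∈ unitBox d, (e j : ℝ) * qR S u (u + e)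

lemma abs_phi_le_one (S : (ZdGraph d).Subgraph) (u : Fin d → ℤ) (j : Fin d) :
    |phi S u j| ≤ 1 := by
  calc |phi S u j| ≤ ∑ e ∈ unitBox d, |(e j : ℝ) * qR S u (u + e)| :=
        Finset.abs_sum_le_sum_abs _ _
  _ ≤ ∑ e ∈ unitBox d, qR S u (u + e) := by
      refine Finset.sum_le_sum fun e he => ?_
      rw [abs_mul, abs_of_nonneg (qR_nonneg _ _ _)]
      have hej : -1 ≤ e j ∧ e j ≤ 1 := mem_unitBox.1 he j
      have : |(e j : ℝ)| ≤ 1 := by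
        rw [abs_le]
        constructor
        · exact_mod_cast hej.1
        · exact_mod_cast hej.2
      nlinarith [qR_nonneg S u (u + e)]
  _ ≤ 1 := sum_qR_le_one S u

lemma deg_qR_symm (S : (ZdGraph d).Subgraph) (u v : Fin d → ℤ) :
    (subDeg S u : ℝ) * qR S u v = (subDeg S v : ℝ) * qR S v u := by
  unfold qR
  by_cases h : S.Adj u v
  · rw [if_pos h, if_pos h.symm]
    have h1 : (subDeg S u : ℝ) ≠ 0 := Nat.cast_ne_zero.mpr (by have := one_le_subDeg h; omega)
    have h2 : (subDeg S v : ℝ) ≠ 0 :=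
      Nat.cast_ne_zero.mpr (by have := one_le_subDeg h.symm; omega)
    field_simp
  · rw [if_neg h, if_neg (fun h' => h h'.symm), mul_zero, mul_zero]

lemma qR_mean_zero (S : (ZdGraph d).Subgraph) (u : Fin d → ℤ) {T : Finset (Fin d → ℤ)}
    (hT : ∀ v, S.Adj u v → v ∈ T) (h1 : 1 ≤ subDeg S u) (j : Fin d) :
    ∑ v ∈ T, qR S u v * (((v j : ℤ) : ℝ) - ((u j : ℤ) : ℝ) - phi S u j) = 0 := by
  rw [sum_qR_mul S u hT]
  have : ∀ e ∈ unitBox d,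
      qR S u (u + e) * (((((u + e) j : ℤ)) : ℝ) - ((u j : ℤ) : ℝ) - phi S u j)
      = (e j : ℝ) * qR S u (u + e) - qR S u (u + e) * phi S u j := by
    intro e _
    have : (((u + e) j : ℤ) : ℝ) = ((u j : ℤ) : ℝ) + ((e j : ℤ) : ℝ) := by
      simp [Pi.add_apply]
    rw [this]; ring
  rw [Finset.sum_congr rfl this, Finset.sum_sub_distrib, ← phi,
    ← Finset.sum_mul, sum_qR_unit h1]
  ring

/-! ### Path weights -/

def boxP (d n : ℕ) : Finset (Fin d → ℤ) := Fintype.piFinset fun _ => Finset.Icc (-(n:ℤ)) (n:ℤ)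

def pf (d n k : ℕ) : Finset (Fin (k+1) → Fin d → ℤ) := Fintype.piFinset fun _ => boxP d n

def rho (S : (ZdGraph d).Subgraph) (k : ℕ) (x : Fin (k+1) → Fin d → ℤ) : ℝ :=
  ∏ i : Fin k, qR S (x i.castSucc) (x i.succ)

def wgt (S : (ZdGraph d).Subgraph) (k : ℕ) (x : Fin (k+1) → Fin d → ℤ) : ℝ :=
  (if x 0 = 0 then 1 else 0) * rho S k x

lemma rho_nonneg (S : (ZdGraph d).Subgraph) (k : ℕ) (x : Fin (k+1) → Fin d → ℤ) :
    0 ≤ rho S k x :=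
  Finset.prod_nonneg fun i _ => qR_nonneg _ _ _

lemma wgt_nonneg (S : (ZdGraph d).Subgraph) (k : ℕ) (x : Fin (k+1) → Fin d → ℤ) :
    0 ≤ wgt S k x := by
  unfold wgt
  have := rho_nonneg S k x
  split <;> nlinarith

lemma rho_snoc (S : (ZdGraph d).Subgraph) (k : ℕ) (x : Fin (k+1) → Fin d → ℤ)
    (v : Fin d → ℤ) :
    rho S (k+1) (Fin.snoc x v) = rho S k x * qR S (x (Fin.last k)) v := by
  rw [rho, rho, Fin.prod_univ_castSucc]
  congr 1
  · exact Finset.prod_congr rfl fun i _ => by simp [Fin.succ_castSucc, -Fin.castSucc_succ]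
  · simp

lemma wgt_snoc (S : (ZdGraph d).Subgraph) (k : ℕ) (x : Fin (k+1) → Fin d → ℤ)
    (v : Fin d → ℤ) :
    wgt S (k+1) (Fin.snoc x v) = wgt S k x * qR S (x (Fin.last k)) v := by
  rw [wgt, wgt, rho_snoc]
  have h0 : (Fin.snoc x v : Fin (k+2) → Fin d → ℤ) 0 = x 0 := by
    have h1 : (0 : Fin (k+2)) = Fin.castSucc 0 := rfl
    rw [h1, Fin.snoc_castSucc]
  rw [h0]; ring

lemma sum_pf_succ (n k : ℕ) (G : (Fin (k+2) → Fin d → ℤ) → ℝ) :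
    ∑ x ∈ pf d n (k+1), G x = ∑ x ∈ pf d n k, ∑ v ∈ boxP d n, G (Fin.snoc x v) := by
  rw [← Finset.sum_product']
  refine Finset.sum_nbij' (i := fun x => (Fin.init x, x (Fin.last (k+1))))
    (j := fun p => Fin.snoc p.1 p.2) ?_ ?_ ?_ ?_ ?_
  · intro x hx
    rw [pf, Fintype.mem_piFinset] at hx
    rw [Finset.mem_product]
    constructor
    · rw [pf, Fintype.mem_piFinset]
      intro i
      exact hx _
    · exact hx _
  · intro p hp
    rw [Finset.mem_product] at hp
    have hp1 := hp.1
    rw [pf, Fintype.mem_piFinset] at hp1 ⊢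
    intro i
    refine Fin.lastCases ?_ ?_ i
    · rw [Fin.snoc_last]; exact hp.2
    · intro j
      rw [Fin.snoc_castSucc]; exact hp1 j
  · intro x _
    simp
  · intro p _
    simp
  · intro x _
    simp

lemma wgt_ne_zero_x0 {S : (ZdGraph d).Subgraph} {k : ℕ} {x : Fin (k+1) → Fin d → ℤ}
    (h : wgt S k x ≠ 0) : x 0 = 0 := by
  by_contra hc
  exact h (by simp [wgt, hc])

lemma wgt_ne_zero_adj {S : (ZdGraph d).Subgraph} {k : ℕ} {x : Fin (k+1) → Fin d → ℤ}
    (h : wgt S k x ≠ 0) (i : Fin k) : S.Adj (x i.castSucc) (x i.succ) := by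
  have hr : rho S k x ≠ 0 := fun hc => h (by simp [wgt, hc])
  rw [rho] at hr
  have := Finset.prod_ne_zero_iff.1 hr i (Finset.mem_univ i)
  exact qR_ne_zero_adj this

lemma wgt_coord_bound {S : (ZdGraph d).Subgraph} {k : ℕ} {x : Fin (k+1) → Fin d → ℤ}
    (h : wgt S k x ≠ 0) (i : Fin (k+1)) (j : Fin d) : (x i j).natAbs ≤ (i : ℕ) := by
  induction i using Fin.induction with
  | zero =>
    rw [wgt_ne_zero_x0 h]
    simp
  | succ i ih =>
    have hadj := wgt_ne_zero_adj h i
    have hc := adj_coord (S.adj_sub hadj) j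
    have : ((i.castSucc : ℕ) : ℕ) = (i : ℕ) := rfl
    rw [Fin.val_succ]
    rw [Fin.coe_castSucc] at ih
    omega

lemma wgt_mem_pf {S : (ZdGraph d).Subgraph} {n k : ℕ} {x : Fin (k+1) → Fin d → ℤ}
    (h : wgt S k x ≠ 0) (hkn : k ≤ n) : x ∈ pf d n k := by
  rw [pf, Fintype.mem_piFinset]
  intro i
  rw [boxP, Fintype.mem_piFinset]
  intro j
  have h1 := wgt_coord_bound h i j
  have h2 : (i : ℕ) ≤ k := Fin.is_le i
  rw [Finset.mem_Icc]
  omega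

lemma wgt_deg_last {S : (ZdGraph d).Subgraph} {k : ℕ} {x : Fin (k+1) → Fin d → ℤ}
    (hS : 1 ≤ subDeg S 0) (h : wgt S k x ≠ 0) : 1 ≤ subDeg S (x (Fin.last k)) := by
  cases k with
  | zero =>
    have h0 : x (Fin.last 0) = 0 := by
      have : Fin.last 0 = 0 := rfl
      rw [this, wgt_ne_zero_x0 h]
    rw [h0]; exact hS
  | succ k' =>
    have hadj := wgt_ne_zero_adj h (Fin.last k')
    rw [Fin.succ_last] at hadj
    exact one_le_subDeg hadj.symm

lemma wgt_nbr_box {S : (ZdGraph d).Subgraph} {n k : ℕ} {x : Fin (k+1) → Fin d → ℤ}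
    (h : wgt S k x ≠ 0) (hkn : k + 1 ≤ n) :
    ∀ v, S.Adj (x (Fin.last k)) v → v ∈ boxP d n := by
  intro v hv
  rw [boxP, Fintype.mem_piFinset]
  intro j
  have h1 := adj_coord (S.adj_sub hv) j
  have h2 := wgt_coord_bound h (Fin.last k) j
  rw [Fin.val_last] at h2
  rw [Finset.mem_Icc]
  omega

lemma sum_wgt {S : (ZdGraph d).Subgraph} {n : ℕ} (hS : 1 ≤ subDeg S 0) :
    ∀ k, k ≤ n → ∑ x ∈ pf d n k, wgt S k x = 1 := by
  intro k
  induction k with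
  | zero =>
    intro _
    rw [Finset.sum_eq_single (fun _ : Fin 1 => (0 : Fin d → ℤ))]
    · simp [wgt, rho]
    · intro b hb hne
      rcases eq_or_ne (b 0) 0 with h0 | h0
      · exfalso
        apply hne
        funext i
        have : i = 0 := Subsingleton.elim i 0
        rw [this, h0]
      · simp [wgt, h0]
    · intro hmem
      exfalso
      apply hmem
      rw [pf, Fintype.mem_piFinset]
      intro i
      rw [boxP, Fintype.mem_piFinset]
      intro j
      simp [Finset.mem_Icc]
  | succ k ih =>
    intro hk
    rw [sum_pf_succ]
    have hstep : ∀ x ∈ pf d n k, ∑ v ∈ boxP d n, wgt S (k+1) (Fin.snoc x v) = wgt S k x := by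
      intro x _
      have hsn : ∀ v, wgt S (k+1) (Fin.snoc x v) = wgt S k x * qR S (x (Fin.last k)) v :=
        fun v => wgt_snoc S k x v
      rw [Finset.sum_congr rfl fun v _ => hsn v, ← Finset.mul_sum]
      rcases eq_or_ne (wgt S k x) 0 with h0 | h0
      · simp [h0]
      · have hmass : ∑ v ∈ boxP d n, qR S (x (Fin.last k)) v = 1 := by
          have := sum_qR_mul S (x (Fin.last k)) (wgt_nbr_box h0 hk) (fun _ => (1:ℝ))
          simp only [mul_one] at this
          rw [this]
          exact sum_qR_unit (wgt_deg_last hS h0)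
        rw [hmass, mul_one]
    rw [Finset.sum_congr rfl hstep]
    exact ih (by omega)

lemma sum_wgt_init {S : (ZdGraph d).Subgraph} {n k : ℕ} (hS : 1 ≤ subDeg S 0)
    (hk : k + 1 ≤ n) (F : (Fin (k+1) → Fin d → ℤ) → ℝ) :
    ∑ x ∈ pf d n (k+1), wgt S (k+1) x * F (Fin.init x)
      = ∑ x ∈ pf d n k, wgt S k x * F x := by
  rw [sum_pf_succ]
  refine Finset.sum_congr rfl fun x _ => ?_
  have hsn : (∑ v ∈ boxP d n, wgt S (k+1) (Fin.snoc x v)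
        * F (Fin.init (Fin.snoc x v : Fin (k+2) → Fin d → ℤ)))
      = (wgt S k x * F x) * ∑ v ∈ boxP d n, qR S (x (Fin.last k)) v := by
    rw [Finset.mul_sum]
    refine Finset.sum_congr rfl fun v _ => ?_
    rw [wgt_snoc, Fin.init_snoc]
    ring
  rw [hsn]
  rcases eq_or_ne (wgt S k x) 0 with h0 | h0
  · simp [h0]
  · have hmass : ∑ v ∈ boxP d n, qR S (x (Fin.last k)) v = 1 := by
      have := sum_qR_mul S (x (Fin.last k)) (wgt_nbr_box h0 hk) (fun _ => (1:ℝ))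
      simp only [mul_one] at this
      rw [this]
      exact sum_qR_unit (wgt_deg_last hS h0)
    rw [hmass, mul_one]

lemma sum_wgt_res {S : (ZdGraph d).Subgraph} {n : ℕ} (hS : 1 ≤ subDeg S 0) {m : ℕ}
    (F : (Fin (m+1) → Fin d → ℤ) → ℝ) :
    ∀ k, ∀ (hmk : m ≤ k), k ≤ n →
    ∑ x ∈ pf d n k, wgt S k x * F (fun i => x (Fin.castLE (Nat.succ_le_succ hmk) i))
      = ∑ x ∈ pf d n m, wgt S m x * F x := by
  intro k
  induction k with
  | zero =>
    intro hmk _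
    have hm : m = 0 := by omega
    subst hm
    exact Finset.sum_congr rfl fun x _ => rfl
  | succ k ih =>
    intro hmk hkn
    rcases Nat.lt_or_ge m (k+1) with hlt | hge
    · have hmk' : m ≤ k := by omega
      have hres : ∀ x : Fin (k+2) → Fin d → ℤ,
          (fun i => x (Fin.castLE (Nat.succ_le_succ hmk) i))
          = (fun i => (Fin.init x) (Fin.castLE (Nat.succ_le_succ hmk') i)) := by
        intro x
        funext i
        rw [Fin.init]
        congr 1
      calc ∑ x ∈ pf d n (k+1), wgt S (k+1) x * F (fun i => x (Fin.castLE (Nat.succ_le_succ hmk) i))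
          = ∑ x ∈ pf d n (k+1), wgt S (k+1) x
            * (fun y => F (fun i => y (Fin.castLE (Nat.succ_le_succ hmk') i))) (Fin.init x) := by
            refine Finset.sum_congr rfl fun x _ => ?_
            rw [hres x]
      _ = ∑ x ∈ pf d n k, wgt S k x * F (fun i => x (Fin.castLE (Nat.succ_le_succ hmk') i)) :=
            sum_wgt_init hS hkn (fun y => F (fun i => y (Fin.castLE (Nat.succ_le_succ hmk') i)))
      _ = ∑ x ∈ pf d n m, wgt S m x * F x := ih hmk' (by omega)
    · have hm : m = k + 1 := by omega
      subst hm
      exact Finset.sum_congr rfl fun x _ => rfl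

/-! ### Martingale and pathwise Doob -/

def mart (S : (ZdGraph d).Subgraph) (k : ℕ) (x : Fin (k+1) → Fin d → ℤ) (j : Fin d) : ℝ :=
  ((x (Fin.last k) j : ℤ) : ℝ) - ∑ i : Fin k, phi S (x i.castSucc) j

def sMf (S : (ZdGraph d).Subgraph) (k : ℕ) (x : Fin (k+1) → Fin d → ℤ) : ℝ :=
  ∑ j, |mart S k x j|

lemma sMf_nonneg (S : (ZdGraph d).Subgraph) (k : ℕ) (x : Fin (k+1) → Fin d → ℤ) :
    0 ≤ sMf S k x :=
  Finset.sum_nonneg fun j _ => abs_nonneg _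

lemma abs_mart_le_sMf (S : (ZdGraph d).Subgraph) (k : ℕ) (x : Fin (k+1) → Fin d → ℤ)
    (j : Fin d) : |mart S k x j| ≤ sMf S k x :=
  Finset.single_le_sum (f := fun j => |mart S k x j|) (fun i _ => abs_nonneg _)
    (Finset.mem_univ j)

lemma mart_snoc (S : (ZdGraph d).Subgraph) (k : ℕ) (x : Fin (k+1) → Fin d → ℤ)
    (v : Fin d → ℤ) (j : Fin d) :
    mart S (k+1) (Fin.snoc x v) j
      = mart S k x j + (((v j : ℤ) : ℝ) - ((x (Fin.last k) j : ℤ) : ℝ)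
          - phi S (x (Fin.last k)) j) := by
  rw [mart, mart, Fin.sum_univ_castSucc]
  have h1 : (Fin.snoc x v : Fin (k+2) → Fin d → ℤ) (Fin.last (k+1)) = v := Fin.snoc_last _ _
  have h2 : ∀ i : Fin k, (Fin.snoc x v : Fin (k+2) → Fin d → ℤ) (i.castSucc).castSucc
      = x i.castSucc := by
    intro i; rw [Fin.snoc_castSucc]
  have h3 : (Fin.snoc x v : Fin (k+2) → Fin d → ℤ) ((Fin.last k).castSucc)
      = x (Fin.last k) := Fin.snoc_castSucc _ _ _
  rw [h1, h3]
  have h4 : ∀ i : Fin k, phi S ((Fin.snoc x v : Fin (k+2) → Fin d → ℤ) (i.castSucc).castSucc) j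
      = phi S (x i.castSucc) j := fun i => by rw [h2 i]
  rw [Finset.sum_congr rfl fun i _ => h4 i]
  ring

/-- running maximum of a sequence of reals -/
def maxR (s : ℕ → ℝ) : ℕ → ℝ
  | 0 => s 0
  | k+1 => max (maxR s k) (s (k+1))

lemma le_maxR (s : ℕ → ℝ) {i k : ℕ} (h : i ≤ k) : s i ≤ maxR s k := by
  induction k with
  | zero =>
    have : i = 0 := by omega
    subst this; exact le_rfl
  | succ k ih =>
    rcases Nat.lt_or_ge i (k+1) with h1 | h1
    · exact le_trans (ih (by omega)) (le_max_left _ _)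
    · have : i = k + 1 := by omega
      subst this; exact le_max_right _ _

lemma maxR_nonneg {s : ℕ → ℝ} (h : ∀ k, 0 ≤ s k) (k : ℕ) : 0 ≤ maxR s k :=
  le_trans (h 0) (le_maxR s (Nat.zero_le k))

lemma maxR_congr {s t : ℕ → ℝ} (k : ℕ) (h : ∀ i ≤ k, s i = t i) :
    maxR s k = maxR t k := by
  induction k with
  | zero => exact h 0 le_rfl
  | succ k ih =>
    rw [maxR, maxR, ih (fun i hi => h i (by omega)), h (k+1) le_rfl]

private lemma doob_abel (s : ℕ → ℝ) (n : ℕ) :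
    (∑ k ∈ Finset.range n, maxR s k * (s (k+1) - s k))
      + (∑ k ∈ Finset.range n, s (k+1) * (maxR s (k+1) - maxR s k))
      = maxR s n * s n - s 0 * s 0 := by
  induction n with
  | zero => simp [maxR]
  | succ n ih =>
    rw [Finset.sum_range_succ, Finset.sum_range_succ]
    have : maxR s (n+1) = max (maxR s n) (s (n+1)) := rfl
    nlinarith [ih]

private lemma doob_J (s : ℕ → ℝ) (n : ℕ) :
    (maxR s n)^2 - (s 0)^2
      ≤ 2 * ∑ k ∈ Finset.range n, s (k+1) * (maxR s (k+1) - maxR s k) := by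
  induction n with
  | zero => simp [maxR]
  | succ n ih =>
    rw [Finset.sum_range_succ]
    rcases le_or_gt (s (n+1)) (maxR s n) with h | h
    · have h1 : maxR s (n+1) = maxR s n := by
        rw [maxR, max_eq_left h]
      rw [h1]
      nlinarith
    · have h1 : maxR s (n+1) = s (n+1) := by
        rw [maxR, max_eq_right h.le]
      rw [h1]
      nlinarith [sq_nonneg (s (n+1) - maxR s n)]

lemma pathwise_doob (s : ℕ → ℝ) (h0 : ∀ k, 0 ≤ s k) (n : ℕ) :
    (maxR s n)^2 ≤ 4 * (s n)^2 - 4 * ∑ k ∈ Finset.range n, maxR s k * (s (k+1) - s k) := by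
  have h1 := doob_abel s n
  have h2 := doob_J s n
  have h3 : 0 ≤ maxR s n := maxR_nonneg h0 n
  have h4 : s n ≤ maxR s n := le_maxR s le_rfl
  nlinarith [sq_nonneg (2 * s n - maxR s n), sq_nonneg (s 0), h0 n, h0 0]

/-! ### quenched estimates -/

lemma mass_boxP {S : (ZdGraph d).Subgraph} {n k : ℕ} {x : Fin (k+1) → Fin d → ℤ}
    (hdeg : 1 ≤ subDeg S (x (Fin.last k)))
    (hT : ∀ v, S.Adj (x (Fin.last k)) v → v ∈ boxP d n) :
    ∑ v ∈ boxP d n, qR S (x (Fin.last k)) v = 1 := by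
  have h := sum_qR_mul S (x (Fin.last k)) hT (fun _ => (1:ℝ))
  simp only [mul_one] at h
  rw [h]
  exact sum_qR_unit hdeg

lemma mart_avg {S : (ZdGraph d).Subgraph} {n k : ℕ} {x : Fin (k+1) → Fin d → ℤ}
    (hdeg : 1 ≤ subDeg S (x (Fin.last k)))
    (hT : ∀ v, S.Adj (x (Fin.last k)) v → v ∈ boxP d n) (j : Fin d) :
    ∑ v ∈ boxP d n, qR S (x (Fin.last k)) v * mart S (k+1) (Fin.snoc x v) j
      = mart S k x j := by
  have h1 : ∀ v ∈ boxP d n, qR S (x (Fin.last k)) v * mart S (k+1) (Fin.snoc x v) j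
      = qR S (x (Fin.last k)) v * mart S k x j
        + qR S (x (Fin.last k)) v * (((v j : ℤ):ℝ) - ((x (Fin.last k) j : ℤ):ℝ)
            - phi S (x (Fin.last k)) j) := by
    intro v _
    rw [mart_snoc]
    ring
  rw [Finset.sum_congr rfl h1, Finset.sum_add_distrib,
    qR_mean_zero S (x (Fin.last k)) hT hdeg j, add_zero, ← Finset.sum_mul,
    mass_boxP hdeg hT, one_mul]

lemma sMf_step {S : (ZdGraph d).Subgraph} {n k : ℕ} {x : Fin (k+1) → Fin d → ℤ}
    (hdeg : 1 ≤ subDeg S (x (Fin.last k)))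
    (hT : ∀ v, S.Adj (x (Fin.last k)) v → v ∈ boxP d n) :
    sMf S k x ≤ ∑ v ∈ boxP d n, qR S (x (Fin.last k)) v * sMf S (k+1) (Fin.snoc x v) := by
  have hj : ∀ j : Fin d, |mart S k x j|
      ≤ ∑ v ∈ boxP d n, qR S (x (Fin.last k)) v * |mart S (k+1) (Fin.snoc x v) j| := by
    intro j
    calc |mart S k x j|
        = |∑ v ∈ boxP d n, qR S (x (Fin.last k)) v * mart S (k+1) (Fin.snoc x v) j| := by
          rw [mart_avg hdeg hT j]
    _ ≤ ∑ v ∈ boxP d n, |qR S (x (Fin.last k)) v * mart S (k+1) (Fin.snoc x v) j| :=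
          Finset.abs_sum_le_sum_abs _ _
    _ = ∑ v ∈ boxP d n, qR S (x (Fin.last k)) v * |mart S (k+1) (Fin.snoc x v) j| := by
          refine Finset.sum_congr rfl fun v _ => ?_
          rw [abs_mul, abs_of_nonneg (qR_nonneg _ _ _)]
  calc sMf S k x ≤ ∑ j, ∑ v ∈ boxP d n, qR S (x (Fin.last k)) v
        * |mart S (k+1) (Fin.snoc x v) j| := Finset.sum_le_sum fun j _ => hj j
  _ = ∑ v ∈ boxP d n, qR S (x (Fin.last k)) v * sMf S (k+1) (Fin.snoc x v) := by
      rw [Finset.sum_comm]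
      refine Finset.sum_congr rfl fun v _ => ?_
      rw [sMf, Finset.mul_sum]

lemma sum_wgt_mart_sq {S : (ZdGraph d).Subgraph} {n : ℕ} (hS : 1 ≤ subDeg S 0) (j : Fin d) :
    ∀ k, k ≤ n → ∑ x ∈ pf d n k, wgt S k x * (mart S k x j)^2 ≤ 4 * k := by
  intro k
  induction k with
  | zero =>
    intro _
    have hz : ∀ x ∈ pf d n 0, wgt S 0 x * (mart S 0 x j)^2 = 0 := by
      intro x _
      rcases eq_or_ne (wgt S 0 x) 0 with h0 | h0
      · rw [h0, zero_mul]
      · have hx0 := wgt_ne_zero_x0 h0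
        have hm : mart S 0 x j = 0 := by
          rw [mart]
          have hlast : (Fin.last 0) = (0 : Fin 1) := rfl
          rw [hlast, hx0]
          simp
        rw [hm]
        ring
    rw [Finset.sum_congr rfl hz]
    simp
  | succ k ih =>
    intro hk
    rw [sum_pf_succ]
    have hx : ∀ x ∈ pf d n k,
        ∑ v ∈ boxP d n, wgt S (k+1) (Fin.snoc x v) * (mart S (k+1) (Fin.snoc x v) j)^2
          ≤ wgt S k x * ((mart S k x j)^2 + 4) := by
      intro x _
      rcases eq_or_ne (wgt S k x) 0 with h0 | h0
      · have hz : ∀ v ∈ boxP d n,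
            wgt S (k+1) (Fin.snoc x v) * (mart S (k+1) (Fin.snoc x v) j)^2 = 0 := by
          intro v _
          rw [wgt_snoc, h0]
          ring
        rw [Finset.sum_congr rfl hz, h0]
        simp
      · have hdeg := wgt_deg_last hS h0
        have hT := wgt_nbr_box h0 hk
        set u := x (Fin.last k) with hu
        set m := mart S k x j with hm
        have hmass := mass_boxP (n := n) hdeg hT
        have hmean := qR_mean_zero S u hT hdeg j
        have hterm : ∀ v ∈ boxP d n,
            wgt S (k+1) (Fin.snoc x v) * (mart S (k+1) (Fin.snoc x v) j)^2
            = wgt S k x * (qR S u v * m^2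
              + 2 * m * (qR S u v * (((v j : ℤ):ℝ) - ((u j : ℤ):ℝ) - phi S u j))
              + qR S u v * (((v j : ℤ):ℝ) - ((u j : ℤ):ℝ) - phi S u j)^2) := by
          intro v _
          rw [wgt_snoc, mart_snoc]
          ring
        have hD2 : ∀ v ∈ boxP d n,
            qR S u v * (((v j : ℤ):ℝ) - ((u j : ℤ):ℝ) - phi S u j)^2 ≤ 4 * qR S u v := by
          intro v _
          rcases eq_or_ne (qR S u v) 0 with hq | hq
          · rw [hq]
            simp
          · have hadj := qR_ne_zero_adj hq
            have h1 := adj_coord (S.adj_sub hadj) j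
            have h2 := abs_phi_le_one S u j
            have h3 : |((v j : ℤ):ℝ) - ((u j : ℤ):ℝ)| ≤ 1 := by
              have h4 : (((u j - v j).natAbs : ℕ) : ℝ) = |((u j : ℤ):ℝ) - ((v j : ℤ):ℝ)| := by
                rw [Nat.cast_natAbs]
                push_cast
                ring_nf
              have h5 : (((u j - v j).natAbs : ℕ) : ℝ) ≤ 1 := by exact_mod_cast h1
              rw [h4] at h5
              rw [abs_sub_comm]
              exact h5
            have h6 : (((v j : ℤ):ℝ) - ((u j : ℤ):ℝ) - phi S u j)^2 ≤ 4 := by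
              have := abs_sub_abs_le_abs_sub (((v j : ℤ):ℝ) - ((u j : ℤ):ℝ)) (phi S u j)
              nlinarith [abs_nonneg (((v j : ℤ):ℝ) - ((u j : ℤ):ℝ)), sq_abs (((v j : ℤ):ℝ) - ((u j : ℤ):ℝ) - phi S u j), abs_nonneg (((v j : ℤ):ℝ) - ((u j : ℤ):ℝ) - phi S u j), abs_le.1 h2, abs_le.1 h3]
            have hq0 := qR_nonneg S u v
            nlinarith
        calc ∑ v ∈ boxP d n, wgt S (k+1) (Fin.snoc x v) * (mart S (k+1) (Fin.snoc x v) j)^2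
            = wgt S k x * ((∑ v ∈ boxP d n, qR S u v) * m^2
              + 2 * m * (∑ v ∈ boxP d n, qR S u v * (((v j : ℤ):ℝ) - ((u j : ℤ):ℝ) - phi S u j))
              + ∑ v ∈ boxP d n, qR S u v * (((v j : ℤ):ℝ) - ((u j : ℤ):ℝ) - phi S u j)^2) := by
              rw [Finset.sum_congr rfl hterm, ← Finset.mul_sum]
              congr 1
              rw [Finset.sum_add_distrib, Finset.sum_add_distrib, ← Finset.sum_mul,
                ← Finset.mul_sum]
        _ ≤ wgt S k x * ((mart S k x j)^2 + 4) := by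
              rw [hmass, hmean, one_mul, mul_zero, add_zero]
              have h7 : ∑ v ∈ boxP d n, qR S u v
                  * (((v j : ℤ):ℝ) - ((u j : ℤ):ℝ) - phi S u j)^2 ≤ 4 := by
                calc ∑ v ∈ boxP d n, qR S u v * (((v j : ℤ):ℝ) - ((u j : ℤ):ℝ) - phi S u j)^2
                    ≤ ∑ v ∈ boxP d n, 4 * qR S u v := Finset.sum_le_sum hD2
                _ = 4 := by rw [← Finset.mul_sum, hmass, mul_one]
              have := wgt_nonneg S k x
              nlinarith
    calc ∑ x ∈ pf d n k, ∑ v ∈ boxP d n,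
          wgt S (k+1) (Fin.snoc x v) * (mart S (k+1) (Fin.snoc x v) j)^2
        ≤ ∑ x ∈ pf d n k, wgt S k x * ((mart S k x j)^2 + 4) := Finset.sum_le_sum hx
    _ = (∑ x ∈ pf d n k, wgt S k x * (mart S k x j)^2) + 4 * ∑ x ∈ pf d n k, wgt S k x := by
        rw [Finset.mul_sum]
        rw [← Finset.sum_add_distrib]
        refine Finset.sum_congr rfl fun x _ => ?_
        ring
    _ ≤ 4 * k + 4 * 1 := by
        have h8 := ih (by omega)
        have h9 := sum_wgt (n := n) hS k (by omega)
        rw [h9]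
        linarith
    _ = 4 * (k+1 : ℕ) := by push_cast; ring

/-! ### restriction and running maximum of the martingale -/

def res (n m : ℕ) (h : m ≤ n) (x : Fin (n+1) → Fin d → ℤ) : Fin (m+1) → Fin d → ℤ :=
  fun i => x (Fin.castLE (Nat.succ_le_succ h) i)

def sA (S : (ZdGraph d).Subgraph) (n : ℕ) (x : Fin (n+1) → Fin d → ℤ) (k : ℕ) : ℝ :=
  if h : k ≤ n then sMf S k (res n k h x) else 0

lemma sA_eq {n k : ℕ} (h : k ≤ n) (S : (ZdGraph d).Subgraph) (x : Fin (n+1) → Fin d → ℤ) :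
    sA S n x k = sMf S k (res n k h x) := dif_pos h

lemma sA_nonneg (S : (ZdGraph d).Subgraph) (n : ℕ) (x : Fin (n+1) → Fin d → ℤ) (k : ℕ) :
    0 ≤ sA S n x k := by
  rw [sA]
  split
  · exact sMf_nonneg _ _ _
  · exact le_rfl

lemma res_self (n : ℕ) (x : Fin (n+1) → Fin d → ℤ) : res n n le_rfl x = x :=
  funext fun i => congrArg x (Fin.ext rfl)

lemma res_res {n m l : ℕ} (hmn : m ≤ n) (hlm : l ≤ m) (x : Fin (n+1) → Fin d → ℤ) :
    res m l hlm (res n m hmn x) = res n l (le_trans hlm hmn) x :=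
  funext fun i => congrArg x (Fin.ext rfl)

lemma init_res {n k : ℕ} (h : k + 1 ≤ n) (x : Fin (n+1) → Fin d → ℤ) :
    Fin.init (res n (k+1) h x) = res n k (by omega) x :=
  funext fun i => congrArg x (Fin.ext rfl)

lemma cross_prefix {S : (ZdGraph d).Subgraph} {n k : ℕ} (hS : 1 ≤ subDeg S 0)
    (hk : k + 1 ≤ n) (G : (Fin (k+1) → Fin d → ℤ) → ℝ) (hG : ∀ y, 0 ≤ G y) :
    ∑ x ∈ pf d n (k+1), wgt S (k+1) x * (G (Fin.init x) * sMf S k (Fin.init x))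
      ≤ ∑ x ∈ pf d n (k+1), wgt S (k+1) x * (G (Fin.init x) * sMf S (k+1) x) := by
  rw [sum_pf_succ, sum_pf_succ]
  refine Finset.sum_le_sum fun x _ => ?_
  rcases eq_or_ne (wgt S k x) 0 with h0 | h0
  · refine le_of_eq (Finset.sum_congr rfl fun v _ => ?_)
    rw [wgt_snoc, h0]
    ring
  · have hdeg := wgt_deg_last hS h0
    have hT := wgt_nbr_box h0 hk
    have hL : ∀ v ∈ boxP d n, wgt S (k+1) (Fin.snoc x v)
        * (G (Fin.init (Fin.snoc x v : Fin (k+2) → Fin d → ℤ))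
          * sMf S k (Fin.init (Fin.snoc x v : Fin (k+2) → Fin d → ℤ)))
        = (wgt S k x * G x * sMf S k x) * qR S (x (Fin.last k)) v := by
      intro v _
      rw [wgt_snoc, Fin.init_snoc]
      ring
    have hR : ∀ v ∈ boxP d n, wgt S (k+1) (Fin.snoc x v)
        * (G (Fin.init (Fin.snoc x v : Fin (k+2) → Fin d → ℤ))
          * sMf S (k+1) (Fin.snoc x v))
        = (wgt S k x * G x) * (qR S (x (Fin.last k)) v * sMf S (k+1) (Fin.snoc x v)) := by
      intro v _
      rw [wgt_snoc, Fin.init_snoc]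
      ring
    rw [Finset.sum_congr rfl hL, Finset.sum_congr rfl hR, ← Finset.mul_sum, ← Finset.mul_sum,
      mass_boxP hdeg hT]
    have h1 := sMf_step hdeg hT
    have h2 : 0 ≤ wgt S k x * G x :=
      mul_nonneg (wgt_nonneg _ _ _) (hG x)
    calc wgt S k x * G x * sMf S k x * 1 = (wgt S k x * G x) * sMf S k x := by ring
    _ ≤ (wgt S k x * G x) * ∑ v ∈ boxP d n, qR S (x (Fin.last k)) v
          * sMf S (k+1) (Fin.snoc x v) := mul_le_mul_of_nonneg_left h1 h2

lemma cross_term_nonneg {S : (ZdGraph d).Subgraph} {n k : ℕ} (hS : 1 ≤ subDeg S 0)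
    (hk : k + 1 ≤ n) :
    0 ≤ ∑ x ∈ pf d n n, wgt S n x
        * (maxR (sA S n x) k * (sA S n x (k+1) - sA S n x k)) := by
  classical
  set G : (Fin (k+1) → Fin d → ℤ) → ℝ :=
    fun z => maxR (fun i => if h : i ≤ k then sMf S i (res k i h z) else 0) k with hG
  have hGnn : ∀ z, 0 ≤ G z := by
    intro z
    refine maxR_nonneg (fun i => ?_) k
    split
    · exact sMf_nonneg _ _ _
    · exact le_rfl
  set F : (Fin (k+2) → Fin d → ℤ) → ℝ :=
    fun y => G (Fin.init y) * sMf S (k+1) y - G (Fin.init y) * sMf S k (Fin.init y) with hF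
  have hpoint : ∀ x : Fin (n+1) → Fin d → ℤ,
      maxR (sA S n x) k * (sA S n x (k+1) - sA S n x k)
        = F (res n (k+1) hk x) := by
    intro x
    have hinit : Fin.init (res n (k+1) hk x) = res n k (by omega) x := init_res hk x
    have hmax : maxR (sA S n x) k = G (Fin.init (res n (k+1) hk x)) := by
      rw [hinit, hG]
      refine maxR_congr k fun i hi => ?_
      rw [sA_eq (by omega : i ≤ n), dif_pos hi, res_res]
    have h1 : sA S n x (k+1) = sMf S (k+1) (res n (k+1) hk x) := sA_eq hk S x
    have h2 : sA S n x k = sMf S k (Fin.init (res n (k+1) hk x)) := by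
      rw [hinit]
      exact sA_eq (by omega) S x
    rw [hmax, h1, h2, hF]
    ring
  have hred : ∑ x ∈ pf d n n, wgt S n x
      * (maxR (sA S n x) k * (sA S n x (k+1) - sA S n x k))
      = ∑ y ∈ pf d n (k+1), wgt S (k+1) y * F y := by
    rw [Finset.sum_congr rfl fun x _ => by rw [hpoint x]]
    exact sum_wgt_res hS F n hk le_rfl
  rw [hred]
  have hsub : ∑ y ∈ pf d n (k+1), wgt S (k+1) y * F y
      = (∑ y ∈ pf d n (k+1), wgt S (k+1) y * (G (Fin.init y) * sMf S (k+1) y))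
        - ∑ y ∈ pf d n (k+1), wgt S (k+1) y * (G (Fin.init y) * sMf S k (Fin.init y)) := by
    rw [← Finset.sum_sub_distrib]
    refine Finset.sum_congr rfl fun y _ => ?_
    rw [hF]
    ring
  rw [hsub, sub_nonneg]
  exact cross_prefix hS hk G hGnn

lemma quenched_doob {S : (ZdGraph d).Subgraph} {n : ℕ} (hS : 1 ≤ subDeg S 0) :
    ∑ x ∈ pf d n n, wgt S n x * (maxR (sA S n x) n)^2 ≤ 16 * (d:ℝ)^2 * n := by
  have hpath : ∀ x : Fin (n+1) → Fin d → ℤ, (maxR (sA S n x) n)^2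
      ≤ 4 * (sA S n x n)^2
        - 4 * ∑ k ∈ Finset.range n, maxR (sA S n x) k * (sA S n x (k+1) - sA S n x k) :=
    fun x => pathwise_doob _ (sA_nonneg S n x) n
  have h1 : ∑ x ∈ pf d n n, wgt S n x * (maxR (sA S n x) n)^2
      ≤ ∑ x ∈ pf d n n, wgt S n x * (4 * (sA S n x n)^2
        - 4 * ∑ k ∈ Finset.range n, maxR (sA S n x) k * (sA S n x (k+1) - sA S n x k)) :=
    Finset.sum_le_sum fun x _ => mul_le_mul_of_nonneg_left (hpath x) (wgt_nonneg _ _ _)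
  have h2 : ∑ x ∈ pf d n n, wgt S n x * (4 * (sA S n x n)^2
        - 4 * ∑ k ∈ Finset.range n, maxR (sA S n x) k * (sA S n x (k+1) - sA S n x k))
      = 4 * (∑ x ∈ pf d n n, wgt S n x * (sA S n x n)^2)
        - 4 * ∑ k ∈ Finset.range n, ∑ x ∈ pf d n n, wgt S n x
            * (maxR (sA S n x) k * (sA S n x (k+1) - sA S n x k)) := by
    have e1 : ∀ x ∈ pf d n n, wgt S n x * (4 * (sA S n x n)^2
        - 4 * ∑ k ∈ Finset.range n, maxR (sA S n x) k * (sA S n x (k+1) - sA S n x k))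
        = 4 * (wgt S n x * (sA S n x n)^2)
          - 4 * ∑ k ∈ Finset.range n, wgt S n x
              * (maxR (sA S n x) k * (sA S n x (k+1) - sA S n x k)) := by
      intro x _
      rw [← Finset.mul_sum]
      ring
    rw [Finset.sum_congr rfl e1, Finset.sum_sub_distrib, ← Finset.mul_sum, ← Finset.mul_sum,
      Finset.sum_comm]
  have h3 : 0 ≤ ∑ k ∈ Finset.range n, ∑ x ∈ pf d n n, wgt S n x
      * (maxR (sA S n x) k * (sA S n x (k+1) - sA S n x k)) := by
    refine Finset.sum_nonneg fun k hkr => ?_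
    exact cross_term_nonneg hS (by rw [Finset.mem_range] at hkr; omega)
  have h5 : ∑ x ∈ pf d n n, wgt S n x * (sA S n x n)^2 ≤ 4 * (d:ℝ)^2 * n := by
    have e2 : ∀ x ∈ pf d n n, wgt S n x * (sA S n x n)^2
        ≤ ∑ j : Fin d, (d:ℝ) * (wgt S n x * (mart S n x j)^2) := by
      intro x _
      have hsa : sA S n x n = sMf S n x := by rw [sA_eq le_rfl, res_self]
      rw [hsa]
      have hcs : (sMf S n x)^2 ≤ (d:ℝ) * ∑ j, (mart S n x j)^2 := by
        have hc := sq_sum_le_card_mul_sum_sq (s := (Finset.univ : Finset (Fin d)))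
          (f := fun j => |mart S n x j|)
        simpa [sMf, sq_abs, Finset.card_univ] using hc
      calc wgt S n x * (sMf S n x)^2
          ≤ wgt S n x * ((d:ℝ) * ∑ j, (mart S n x j)^2) :=
            mul_le_mul_of_nonneg_left hcs (wgt_nonneg _ _ _)
      _ = ∑ j : Fin d, (d:ℝ) * (wgt S n x * (mart S n x j)^2) := by
          rw [Finset.mul_sum, Finset.mul_sum]
          exact Finset.sum_congr rfl fun j _ => by ring
    calc ∑ x ∈ pf d n n, wgt S n x * (sA S n x n)^2
        ≤ ∑ x ∈ pf d n n, ∑ j : Fin d, (d:ℝ) * (wgt S n x * (mart S n x j)^2) :=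
          Finset.sum_le_sum e2
    _ = ∑ j : Fin d, (d:ℝ) * ∑ x ∈ pf d n n, wgt S n x * (mart S n x j)^2 := by
        rw [Finset.sum_comm]
        exact Finset.sum_congr rfl fun j _ => by rw [← Finset.mul_sum]
    _ ≤ ∑ j : Fin d, (d:ℝ) * (4 * n) := by
        refine Finset.sum_le_sum fun j _ => ?_
        have := sum_wgt_mart_sq hS j n le_rfl
        have hd0 : (0:ℝ) ≤ (d:ℝ) := Nat.cast_nonneg d
        nlinarith
    _ = 4 * (d:ℝ)^2 * n := by
        rw [Finset.sum_const, Finset.card_univ, Fintype.card_fin, nsmul_eq_mul]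
        ring
  calc ∑ x ∈ pf d n n, wgt S n x * (maxR (sA S n x) n)^2
      ≤ 4 * (∑ x ∈ pf d n n, wgt S n x * (sA S n x n)^2)
        - 4 * ∑ k ∈ Finset.range n, ∑ x ∈ pf d n n, wgt S n x
            * (maxR (sA S n x) k * (sA S n x (k+1) - sA S n x k)) := by
        rw [← h2]; exact h1
  _ ≤ 16 * (d:ℝ)^2 * n := by nlinarith

/-! ### translation and reversal -/

lemma translate_adj (t : Fin d → ℤ) (S : (ZdGraph d).Subgraph) (u v : Fin d → ℤ) :
    (translateSub t S).Adj u v ↔ S.Adj (u - t) (v - t) := Iff.rfl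

lemma subDeg_translate (t : Fin d → ℤ) (S : (ZdGraph d).Subgraph) (u : Fin d → ℤ) :
    subDeg (translateSub t S) u = subDeg S (u - t) := by
  rw [subDeg, subDeg]
  have hset : {w | (translateSub t S).Adj u w} = (fun w => w + t) '' {w | S.Adj (u - t) w} := by
    ext w
    simp only [Set.mem_image, Set.mem_setOf_eq]
    constructor
    · intro h
      exact ⟨w - t, h, by funext j; simp⟩
    · rintro ⟨w', h, rfl⟩
      have hw : w' + t - t = w' := by funext j; simp
      rw [translate_adj, hw]
      exact h
  rw [hset, Set.ncard_image_of_injective _ (fun a b h => by simpa using h)]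

lemma qR_translate (t : Fin d → ℤ) (S : (ZdGraph d).Subgraph) (u v : Fin d → ℤ) :
    qR (translateSub t S) u v = qR S (u - t) (v - t) := by
  rw [qR, qR, subDeg_translate]
  exact if_congr (translate_adj t S u v) rfl rfl

lemma phi_translate (t : Fin d → ℤ) (S : (ZdGraph d).Subgraph) (u : Fin d → ℤ) (j : Fin d) :
    phi (translateSub t S) u j = phi S (u - t) j := by
  rw [phi, phi]
  refine Finset.sum_congr rfl fun e _ => ?_
  rw [qR_translate]
  have he : u + e - t = (u - t) + e := by
    funext j'
    show u j' + e j' - t j' = u j' - t j' + e j'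
    ring
  rw [he]

lemma deg_prod_rev (S : (ZdGraph d).Subgraph) (y : ℕ → Fin d → ℤ) :
    ∀ k : ℕ, (subDeg S (y 0) : ℝ) * ∏ l ∈ Finset.range k, qR S (y l) (y (l+1))
      = (subDeg S (y k) : ℝ) * ∏ l ∈ Finset.range k, qR S (y (l+1)) (y l) := by
  intro k
  induction k with
  | zero => simp
  | succ k ih =>
    rw [Finset.prod_range_succ, Finset.prod_range_succ]
    calc (subDeg S (y 0) : ℝ) * ((∏ l ∈ Finset.range k, qR S (y l) (y (l+1))) * qR S (y k) (y (k+1)))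
        = ((subDeg S (y 0) : ℝ) * ∏ l ∈ Finset.range k, qR S (y l) (y (l+1))) * qR S (y k) (y (k+1)) := by
          ring
    _ = ((subDeg S (y k) : ℝ) * ∏ l ∈ Finset.range k, qR S (y (l+1)) (y l)) * qR S (y k) (y (k+1)) := by
          rw [ih]
    _ = (∏ l ∈ Finset.range k, qR S (y (l+1)) (y l)) * ((subDeg S (y k) : ℝ) * qR S (y k) (y (k+1))) := by
          ring
    _ = (∏ l ∈ Finset.range k, qR S (y (l+1)) (y l)) * ((subDeg S (y (k+1)) : ℝ) * qR S (y (k+1)) (y k)) := by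
          rw [deg_qR_symm]
    _ = (subDeg S (y (k+1)) : ℝ) * ((∏ l ∈ Finset.range k, qR S (y (l+1)) (y l)) * qR S (y (k+1)) (y k)) := by
          ring

/-- ℕ-indexed extension of a path. -/
def xe {n : ℕ} (x : Fin (n+1) → Fin d → ℤ) : ℕ → Fin d → ℤ :=
  fun l => x ⟨min l n, by omega⟩

lemma xe_lt {n : ℕ} (x : Fin (n+1) → Fin d → ℤ) {l : ℕ} (hl : l ≤ n) :
    xe x l = x ⟨l, by omega⟩ := by
  rw [xe]
  have h : (⟨min l n, by omega⟩ : Fin (n+1)) = ⟨l, by omega⟩ := by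
    ext
    simp
    omega
  rw [h]

lemma rho_eq_prod_range {n : ℕ} (S : (ZdGraph d).Subgraph) (x : Fin (n+1) → Fin d → ℤ) :
    rho S n x = ∏ l ∈ Finset.range n, qR S (xe x l) (xe x (l+1)) := by
  rw [rho, ← Fin.prod_univ_eq_prod_range (fun l => qR S (xe x l) (xe x (l+1))) n]
  refine Finset.prod_congr rfl fun i _ => ?_
  congr 1
  · rw [xe_lt x (by omega : (i:ℕ) ≤ n)]
    congr 1
  · rw [xe_lt x (by omega : (i:ℕ)+1 ≤ n)]
    congr 1

lemma mart_res_eq {S : (ZdGraph d).Subgraph} {n k : ℕ} (hk : k ≤ n)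
    (x : Fin (n+1) → Fin d → ℤ) (j : Fin d) :
    mart S k (res n k hk x) j
      = ((xe x k j : ℤ) : ℝ) - ∑ l ∈ Finset.range k, phi S (xe x l) j := by
  rw [mart]
  congr 1
  · rw [xe_lt x hk]
    rfl
  · rw [← Fin.sum_univ_eq_sum_range (fun l => phi S (xe x l) j) k]
    refine Finset.sum_congr rfl fun i _ => ?_
    rw [xe_lt x (by omega : (i:ℕ) ≤ n)]
    rfl

/-- reversed, re-based path -/
def revp (n : ℕ) (x : Fin (n+1) → Fin d → ℤ) : Fin (n+1) → Fin d → ℤ :=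
  fun i => x i.rev - x (Fin.last n)

lemma revp_zero {n : ℕ} (x : Fin (n+1) → Fin d → ℤ) : revp n x 0 = 0 := by
  rw [revp, Fin.rev_zero]
  exact sub_self _

lemma xe_revp {n : ℕ} (x : Fin (n+1) → Fin d → ℤ) {l : ℕ} (hl : l ≤ n) :
    xe (revp n x) l = xe x (n - l) - x (Fin.last n) := by
  rw [xe_lt (revp n x) hl, revp, xe_lt x (by omega : n - l ≤ n)]
  have h : Fin.rev (⟨l, by omega⟩ : Fin (n+1)) = ⟨n - l, by omega⟩ := by
    ext
    simp [Fin.rev]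
  rw [h]

lemma mart_rev_eq {S : (ZdGraph d).Subgraph} {n k : ℕ} (hk : k ≤ n)
    (x : Fin (n+1) → Fin d → ℤ) (j : Fin d) :
    mart (translateSub (-(x (Fin.last n))) S) k (res n k hk (revp n x)) j
      = (((xe x (n-k)) j : ℤ) : ℝ) - ((xe x n j : ℤ) : ℝ)
        - ∑ l ∈ Finset.range k, phi S (xe x (n - l)) j := by
  rw [mart_res_eq hk (revp n x) j]
  have h1 : ∀ l ≤ n, phi (translateSub (-(x (Fin.last n))) S) (xe (revp n x) l) j
      = phi S (xe x (n-l)) j := by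
    intro l hl
    rw [phi_translate, xe_revp x hl]
    congr 1
    funext j'
    simp
  rw [Finset.sum_congr rfl fun l hl => h1 l (by
    rw [Finset.mem_range] at hl; omega)]
  have h2 : xe (revp n x) k = xe x (n-k) - x (Fin.last n) := xe_revp x hk
  rw [h2]
  have h3 : xe x n = x (Fin.last n) := by
    rw [xe_lt x le_rfl]
    exact congrArg x (Fin.ext (by simp))
  rw [h3]
  push_cast [Pi.sub_apply]
  ring

lemma xe_zero {n : ℕ} (x : Fin (n+1) → Fin d → ℤ) : xe x 0 = x 0 := by
  rw [xe_lt x (Nat.zero_le n)]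
  exact congrArg x (by ext; simp)

lemma coord_decomp {S : (ZdGraph d).Subgraph} {n : ℕ} (x : Fin (n+1) → Fin d → ℤ)
    (hx0 : x 0 = 0) {i : ℕ} (hi : i ≤ n) (j : Fin d) :
    2 * ((xe x i j : ℤ) : ℝ)
      = mart S i (res n i hi x) j
        - mart (translateSub (-(x (Fin.last n))) S) n (res n n le_rfl (revp n x)) j
        + mart (translateSub (-(x (Fin.last n))) S) (n-i) (res n (n-i) (Nat.sub_le n i) (revp n x)) j
        + phi S (xe x 0) j - phi S (xe x i) j := by
  rw [mart_res_eq hi x j, mart_rev_eq le_rfl x j, mart_rev_eq (Nat.sub_le n i) x j]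
  have hni : n - (n - i) = i := by omega
  rw [hni, Nat.sub_self]
  have h0 : ((xe x 0 j : ℤ) : ℝ) = 0 := by
    rw [xe_zero, hx0]
    simp
  have hIco : ∑ l ∈ Finset.range n, phi S (xe x (n-l)) j
      - ∑ l ∈ Finset.range (n-i), phi S (xe x (n-l)) j
      = ∑ l ∈ Finset.Ico (n-i) n, phi S (xe x (n-l)) j := by
    rw [Finset.sum_Ico_eq_sub _ (by omega : n - i ≤ n)]
  have hrefl : ∑ l ∈ Finset.Ico (n-i) n, phi S (xe x (n-l)) j
      = ∑ r ∈ Finset.range i, phi S (xe x (r+1)) j := by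
    rw [Finset.sum_Ico_eq_sum_range]
    have hni2 : n - (n - i) = i := by omega
    rw [hni2, ← Finset.sum_range_reflect (fun r => phi S (xe x (r+1)) j) i]
    refine Finset.sum_congr rfl fun r hr => ?_
    rw [Finset.mem_range] at hr
    have hidx : n - (n - i + r) = i - 1 - r + 1 := by omega
    rw [hidx]
  have hs1 : ∑ r ∈ Finset.range i, phi S (xe x (r+1)) j
      = ∑ r ∈ Finset.range i, phi S (xe x r) j + phi S (xe x i) j - phi S (xe x 0) j := by
    have a1 := Finset.sum_range_succ' (fun r => phi S (xe x r) j) i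
    have a2 := Finset.sum_range_succ (fun r => phi S (xe x r) j) i
    rw [a2] at a1
    linarith [a1]
  linarith [hIco, hrefl, hs1, h0]

lemma coord_bound {S : (ZdGraph d).Subgraph} {n : ℕ} (x : Fin (n+1) → Fin d → ℤ)
    (hx0 : x 0 = 0) {i : ℕ} (hi : i ≤ n) (j : Fin d) :
    2 * |((xe x i j : ℤ) : ℝ)|
      ≤ maxR (sA S n x) n
        + 2 * maxR (sA (translateSub (-(x (Fin.last n))) S) n (revp n x)) n + 2 := by
  have hd := coord_decomp (S := S) x hx0 hi j
  have h1 : |mart S i (res n i hi x) j| ≤ maxR (sA S n x) n := by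
    calc |mart S i (res n i hi x) j| ≤ sMf S i (res n i hi x) := abs_mart_le_sMf _ _ _ _
    _ = sA S n x i := (sA_eq hi S x).symm
    _ ≤ maxR (sA S n x) n := le_maxR _ hi
  have h2 : |mart (translateSub (-(x (Fin.last n))) S) n (res n n le_rfl (revp n x)) j|
      ≤ maxR (sA (translateSub (-(x (Fin.last n))) S) n (revp n x)) n := by
    calc |mart (translateSub (-(x (Fin.last n))) S) n (res n n le_rfl (revp n x)) j|
        ≤ sMf (translateSub (-(x (Fin.last n))) S) n (res n n le_rfl (revp n x)) :=
          abs_mart_le_sMf _ _ _ _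
    _ = sA (translateSub (-(x (Fin.last n))) S) n (revp n x) n :=
          (sA_eq le_rfl _ _).symm
    _ ≤ maxR (sA (translateSub (-(x (Fin.last n))) S) n (revp n x)) n := le_maxR _ le_rfl
  have h3 : |mart (translateSub (-(x (Fin.last n))) S) (n-i)
        (res n (n-i) (Nat.sub_le n i) (revp n x)) j|
      ≤ maxR (sA (translateSub (-(x (Fin.last n))) S) n (revp n x)) n := by
    calc |mart (translateSub (-(x (Fin.last n))) S) (n-i)
          (res n (n-i) (Nat.sub_le n i) (revp n x)) j|
        ≤ sMf (translateSub (-(x (Fin.last n))) S) (n-i) (res n (n-i) (Nat.sub_le n i) (revp n x)) :=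
          abs_mart_le_sMf _ _ _ _
    _ = sA (translateSub (-(x (Fin.last n))) S) n (revp n x) (n-i) :=
          (sA_eq (Nat.sub_le n i) _ _).symm
    _ ≤ maxR (sA (translateSub (-(x (Fin.last n))) S) n (revp n x)) n :=
          le_maxR _ (Nat.sub_le n i)
  have h4 := abs_phi_le_one S (xe x 0) j
  have h5 := abs_phi_le_one S (xe x i) j
  have e1 := abs_le.1 h1
  have e2 := abs_le.1 h2
  have e3 := abs_le.1 h3
  have e4 := abs_le.1 h4
  have e5 := abs_le.1 h5
  have habs : 2 * |((xe x i j : ℤ) : ℝ)| = |2 * ((xe x i j : ℤ) : ℝ)| := by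
    rw [abs_mul]
    simp
  rw [habs, abs_le]
  constructor
  · linarith [e1.1, e2.1, e2.2, e3.1, e4.1, e5.1]
  · linarith [e1.2, e2.1, e2.2, e3.2, e4.2, e5.2]

lemma deg_wgt_rev {S : (ZdGraph d).Subgraph} {n : ℕ} (x : Fin (n+1) → Fin d → ℤ)
    (hx0 : x 0 = 0) :
    (subDeg S 0 : ℝ) * wgt S n x
      = (subDeg (translateSub (-(x (Fin.last n))) S) 0 : ℝ)
        * wgt (translateSub (-(x (Fin.last n))) S) n (revp n x) := by
  rw [wgt, wgt, if_pos hx0, if_pos (revp_zero x), one_mul, one_mul]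
  have hdeg : subDeg (translateSub (-(x (Fin.last n))) S) 0 = subDeg S (x (Fin.last n)) := by
    rw [subDeg_translate]
    congr 1
    funext j
    simp
  rw [hdeg]
  rw [rho_eq_prod_range S x, rho_eq_prod_range (translateSub (-(x (Fin.last n))) S) (revp n x)]
  have hq : ∀ l ∈ Finset.range n,
      qR (translateSub (-(x (Fin.last n))) S) (xe (revp n x) l) (xe (revp n x) (l+1))
        = qR S (xe x (n-l)) (xe x (n-l-1)) := by
    intro l hl
    rw [Finset.mem_range] at hl
    rw [qR_translate, xe_revp x (by omega : l ≤ n), xe_revp x (by omega : l+1 ≤ n)]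
    have ha : xe x (n-l) - x (Fin.last n) - -x (Fin.last n) = xe x (n-l) := by
      funext j'; simp
    have hidx : n - (l+1) = n - l - 1 := by omega
    rw [hidx]
    have hb : xe x (n-l-1) - x (Fin.last n) - -x (Fin.last n) = xe x (n-l-1) := by
      funext j'
      simp
    rw [ha, hb]
  rw [Finset.prod_congr rfl hq]
  have hy0 : xe x 0 = 0 := by rw [xe_zero, hx0]
  have hyn : xe x n = x (Fin.last n) := by
    rw [xe_lt x le_rfl]
    exact congrArg x (by ext; simp)
  have hrev := deg_prod_rev S (xe x) n
  rw [hy0, hyn] at hrev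
  have hreflect : ∏ l ∈ Finset.range n, qR S (xe x (n-l)) (xe x (n-l-1))
      = ∏ l ∈ Finset.range n, qR S (xe x (l+1)) (xe x l) := by
    rw [← Finset.prod_range_reflect (fun l => qR S (xe x (l+1)) (xe x l)) n]
    refine Finset.prod_congr rfl fun l hl => ?_
    rw [Finset.mem_range] at hl
    have h1 : n - 1 - l + 1 = n - l := by omega
    have h2 : n - 1 - l = n - l - 1 := by omega
    rw [h1, h2]
  rw [hreflect]
  exact hrev

lemma zd_adj_sub (c : Fin d → ℤ) {u v : Fin d → ℤ} (h : (ZdGraph d).Adj u v) :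
    (ZdGraph d).Adj (u - c) (v - c) := by
  have h' : ∑ i, (u i - v i).natAbs = 1 := h
  show ∑ i, ((u - c) i - (v - c) i).natAbs = 1
  calc ∑ i, ((u - c) i - (v - c) i).natAbs = ∑ i, (u i - v i).natAbs := by
        refine Finset.sum_congr rfl fun i _ => ?_
        congr 1
        show u i - c i - (v i - c i) = u i - v i
        ring
  _ = 1 := h'

/-! ### admissible paths -/

lemma path_coord_bound {n : ℕ} {x : Fin (n+1) → Fin d → ℤ} (hx0 : x 0 = 0)
    (hadj : ∀ i : Fin n, (ZdGraph d).Adj (x i.castSucc) (x i.succ)) (i : Fin (n+1)) (j : Fin d) :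
    (x i j).natAbs ≤ (i : ℕ) := by
  induction i using Fin.induction with
  | zero =>
    rw [hx0]
    simp
  | succ i ih =>
    have hc := adj_coord (hadj i) j
    rw [Fin.coe_castSucc] at ih
    rw [Fin.val_succ]
    omega

def adm (d n : ℕ) : Finset (Fin (n+1) → Fin d → ℤ) :=
  (pf d n n).filter (fun x => x 0 = 0 ∧ ∀ i : Fin n, (ZdGraph d).Adj (x i.castSucc) (x i.succ))

lemma adm_subset {n : ℕ} : adm d n ⊆ pf d n n := Finset.filter_subset _ _

lemma mem_adm_x0 {n : ℕ} {x : Fin (n+1) → Fin d → ℤ} (h : x ∈ adm d n) : x 0 = 0 :=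
  ((Finset.mem_filter.1 h).2).1

lemma path_mem_pf {n : ℕ} {x : Fin (n+1) → Fin d → ℤ} (hx0 : x 0 = 0)
    (hadj : ∀ i : Fin n, (ZdGraph d).Adj (x i.castSucc) (x i.succ)) : x ∈ pf d n n := by
  rw [pf, Fintype.mem_piFinset]
  intro i
  rw [boxP, Fintype.mem_piFinset]
  intro j
  have h1 := path_coord_bound hx0 hadj i j
  have h2 : (i:ℕ) ≤ n := Fin.is_le i
  rw [Finset.mem_Icc]
  omega

lemma wgt_ne_zero_mem_adm {S : (ZdGraph d).Subgraph} {n : ℕ} {x : Fin (n+1) → Fin d → ℤ}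
    (h : wgt S n x ≠ 0) : x ∈ adm d n := by
  rw [adm, Finset.mem_filter]
  exact ⟨wgt_mem_pf h le_rfl, wgt_ne_zero_x0 h, fun i => S.adj_sub (wgt_ne_zero_adj h i)⟩

lemma wgt_eq_zero_of_not_adm {S : (ZdGraph d).Subgraph} {n : ℕ} {x : Fin (n+1) → Fin d → ℤ}
    (h : x ∉ adm d n) : wgt S n x = 0 := by
  by_contra hc
  exact h (wgt_ne_zero_mem_adm hc)

lemma revp_mem_adm {n : ℕ} {x : Fin (n+1) → Fin d → ℤ} (hx : x ∈ adm d n) :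
    revp n x ∈ adm d n := by
  rw [adm, Finset.mem_filter] at hx
  have hx0 := hx.2.1
  have hadj := hx.2.2
  have hadj' : ∀ i : Fin n, (ZdGraph d).Adj ((revp n x) i.castSucc) ((revp n x) i.succ) := by
    intro i
    have hin : (i:ℕ) < n := i.isLt
    have hk : n - (i:ℕ) - 1 < n := by omega
    have hstep := hadj ⟨n - (i:ℕ) - 1, hk⟩
    have ha : (⟨n - (i:ℕ) - 1, hk⟩ : Fin n).castSucc = Fin.rev i.succ := by
      ext
      simp [Fin.rev]
      omega
    have hb : (⟨n - (i:ℕ) - 1, hk⟩ : Fin n).succ = Fin.rev i.castSucc := by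
      ext
      simp [Fin.rev]
      omega
    rw [ha, hb] at hstep
    have hsub := zd_adj_sub (x (Fin.last n)) hstep
    exact hsub.symm
  rw [adm, Finset.mem_filter]
  exact ⟨path_mem_pf (revp_zero x) hadj', revp_zero x, hadj'⟩

lemma revp_revp {n : ℕ} {x : Fin (n+1) → Fin d → ℤ} (hx0 : x 0 = 0) :
    revp n (revp n x) = x := by
  funext i
  simp only [revp, Fin.rev_rev, Fin.rev_last, hx0]
  abel

lemma wgt_D {S : (ZdGraph d).Subgraph} {n : ℕ} {x : Fin (n+1) → Fin d → ℤ}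
    (hn : 1 ≤ n) (h : wgt S n x ≠ 0) : 1 ≤ subDeg S 0 := by
  rcases n with _ | m
  · omega
  · have hadj := wgt_ne_zero_adj h ⟨0, by omega⟩
    have hx0 := wgt_ne_zero_x0 h
    have h0 : (⟨0, by omega⟩ : Fin (m+1)).castSucc = 0 := by
      ext
      simp
    rw [h0, hx0] at hadj
    exact one_le_subDeg hadj

/-! ### measurability -/

lemma measurable_phi_map :
    Measurable (fun S : (ZdGraph d).Subgraph =>
      ((fun w => w ∈ S.verts, S.Adj) :
        ((Fin d → ℤ) → Prop) × ((Fin d → ℤ) → (Fin d → ℤ) → Prop))) :=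
  measurable_iff_comap_le.2 le_rfl

lemma measurable_adj_prop (u v : Fin d → ℤ) :
    Measurable fun S : (ZdGraph d).Subgraph => (S.Adj u v : Prop) :=
  (measurable_pi_apply v).comp ((measurable_pi_apply u).comp
    (measurable_snd.comp measurable_phi_map))

lemma measurableSet_adj (u v : Fin d → ℤ) :
    MeasurableSet {S : (ZdGraph d).Subgraph | S.Adj u v} := by
  have h : {S : (ZdGraph d).Subgraph | S.Adj u v}
      = (fun S : (ZdGraph d).Subgraph => (S.Adj u v : Prop)) ⁻¹' {p : Prop | p} := rfl
  rw [h]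
  exact measurable_adj_prop u v MeasurableSpace.measurableSet_top

lemma measurableSet_D :
    MeasurableSet {S : (ZdGraph d).Subgraph | ∃ b, S.Adj 0 b} := by
  have h : {S : (ZdGraph d).Subgraph | ∃ b, S.Adj 0 b} = ⋃ b, {S | S.Adj 0 b} := by
    ext S
    simp
  rw [h]
  exact MeasurableSet.iUnion fun b => measurableSet_adj 0 b

lemma subDeg_eq_sum (S : (ZdGraph d).Subgraph) (u : Fin d → ℤ) :
    subDeg S u = ∑ e ∈ unitBox d, if S.Adj u (u+e) then 1 else 0 := by
  rw [subDeg_eq_card, nbrF, Finset.card_filter]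

lemma measurable_subDegR (u : Fin d → ℤ) :
    Measurable fun S : (ZdGraph d).Subgraph => (subDeg S u : ℝ) := by
  have h : (fun S : (ZdGraph d).Subgraph => (subDeg S u : ℝ))
      = fun S => ∑ e ∈ unitBox d, (if S.Adj u (u+e) then (1:ℝ) else 0) := by
    funext S
    rw [subDeg_eq_sum]
    push_cast
    exact Finset.sum_congr rfl fun e _ => by split <;> simp
  rw [h]
  exact Finset.measurable_sum _ fun e _ =>
    Measurable.ite (measurableSet_adj _ _) measurable_const measurable_const

lemma measurable_qR (u v : Fin d → ℤ) :
    Measurable fun S : (ZdGraph d).Subgraph => qR S u v :=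
  Measurable.ite (measurableSet_adj u v) (measurable_subDegR u).inv measurable_const

lemma measurable_phi (u : Fin d → ℤ) (j : Fin d) :
    Measurable fun S : (ZdGraph d).Subgraph => phi S u j :=
  Finset.measurable_sum _ fun e _ => (measurable_qR u (u+e)).const_mul _

lemma measurable_wgt (n : ℕ) (x : Fin (n+1) → Fin d → ℤ) :
    Measurable fun S : (ZdGraph d).Subgraph => wgt S n x := by
  unfold wgt
  exact (Finset.measurable_prod _ fun i _ => measurable_qR _ _).const_mul _

lemma measurable_mart (k : ℕ) (x : Fin (k+1) → Fin d → ℤ) (j : Fin d) :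
    Measurable fun S : (ZdGraph d).Subgraph => mart S k x j := by
  unfold mart
  exact measurable_const.sub (Finset.measurable_sum _ fun i _ => measurable_phi _ _)

lemma measurable_sMf (k : ℕ) (x : Fin (k+1) → Fin d → ℤ) :
    Measurable fun S : (ZdGraph d).Subgraph => sMf S k x := by
  unfold sMf
  exact Finset.measurable_sum _ fun j _ => (measurable_mart k x j).abs

lemma measurable_sA (n : ℕ) (x : Fin (n+1) → Fin d → ℤ) (k : ℕ) :
    Measurable fun S : (ZdGraph d).Subgraph => sA S n x k := by
  unfold sA
  split
  · exact measurable_sMf _ _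
  · exact measurable_const

lemma measurable_maxR {α : Type*} [MeasurableSpace α] {f : ℕ → α → ℝ}
    (hf : ∀ k, Measurable (f k)) (k : ℕ) :
    Measurable fun a => maxR (fun i => f i a) k := by
  induction k with
  | zero => exact hf 0
  | succ k ih => exact Measurable.max ih (hf (k+1))

lemma measurable_translateSub (t : Fin d → ℤ) :
    Measurable (translateSub t : (ZdGraph d).Subgraph → (ZdGraph d).Subgraph) := by
  intro s hs
  obtain ⟨A, hA, rfl⟩ := MeasurableSpace.measurableSet_comap.1 hs
  rw [← Set.preimage_comp]
  have hcomp : Measurable ((fun S : (ZdGraph d).Subgraph =>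
      ((fun w => w ∈ S.verts, S.Adj) :
        ((Fin d → ℤ) → Prop) × ((Fin d → ℤ) → (Fin d → ℤ) → Prop))) ∘ translateSub t) := by
    apply Measurable.prodMk
    · apply measurable_pi_lambda
      intro w
      exact (measurable_pi_apply (w - t)).comp (measurable_fst.comp measurable_phi_map)
    · apply measurable_pi_lambda
      intro u
      apply measurable_pi_lambda
      intro v
      exact (measurable_pi_apply (v - t)).comp ((measurable_pi_apply (u - t)).comp
        (measurable_snd.comp measurable_phi_map))
  exact hcomp hA

lemma measurable_subDegE (u : Fin d → ℤ) :
    Measurable fun S : (ZdGraph d).Subgraph => ((subDeg S u : ℕ) : ℝ≥0∞) := by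
  have h : (fun S : (ZdGraph d).Subgraph => ((subDeg S u : ℕ) : ℝ≥0∞))
      = fun S => ENNReal.ofReal ((subDeg S u : ℝ)) := by
    funext S
    rw [ENNReal.ofReal_natCast]
  rw [h]
  exact ENNReal.measurable_ofReal.comp (measurable_subDegR u)

lemma measurable_stepIn (u v : Fin d → ℤ) :
    Measurable fun S : (ZdGraph d).Subgraph => stepIn S u v := by
  unfold stepIn
  exact Measurable.ite (measurableSet_adj u v) (measurable_subDegE u).inv measurable_const

lemma measurable_originCondCyl (n : ℕ) (x : ℕ → Fin d → ℤ) :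
    Measurable fun S : (ZdGraph d).Subgraph => originCondCyl d S n x := by
  unfold originCondCyl
  apply Measurable.ite measurableSet_D
  · unfold srwCylIn
    exact (Finset.measurable_prod _ fun i _ => measurable_stepIn _ _).const_mul _
  · exact measurable_const

lemma measurableSet_cylZ (n : ℕ) (y : ℕ → Fin d → ℤ) :
    MeasurableSet {ω : (ZdGraph d).Subgraph × (ℕ → Fin d → ℤ) | ∀ i ≤ n, ω.2 i = y i} := by
  have h : {ω : (ZdGraph d).Subgraph × (ℕ → Fin d → ℤ) | ∀ i ≤ n, ω.2 i = y i}
      = ⋂ i, ⋂ (_ : i ≤ n), (fun ω : (ZdGraph d).Subgraph × (ℕ → Fin d → ℤ) => ω.2 i) ⁻¹' {y i} := by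
    ext ω
    simp
  rw [h]
  exact MeasurableSet.iInter fun i => MeasurableSet.iInter fun _ =>
    ((measurable_pi_apply i).comp measurable_snd) (measurableSet_singleton _)

/-! ### the bridge and final pointwise bounds -/

def cSup {d n : ℕ} (x : Fin (n+1) → Fin d → ℤ) : ℝ≥0∞ :=
  ⨆ i : Fin (n+1), ((supNormZ (x i) : ℝ≥0∞)) ^ 2

def BB {n : ℕ} (S : (ZdGraph d).Subgraph) (x : Fin (n+1) → Fin d → ℤ) : ℝ :=
  (maxR (sA S n x) n
    + 2 * maxR (sA (translateSub (-(x (Fin.last n))) S) n (revp n x)) n + 2)^2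

lemma BB_nonneg {n : ℕ} (S : (ZdGraph d).Subgraph) (x : Fin (n+1) → Fin d → ℤ) :
    0 ≤ BB S x := sq_nonneg _

lemma sup_eq_cSup {n : ℕ} (ω : (ZdGraph d).Subgraph × (ℕ → Fin d → ℤ)) :
    (⨆ i ∈ Finset.range (n + 1), ((supNormZ (ω.2 i) : ℝ≥0∞)) ^ 2)
      = cSup (fun i : Fin (n+1) => ω.2 i) := by
  apply le_antisymm
  · refine iSup₂_le fun i hi => ?_
    rw [Finset.mem_range] at hi
    exact le_iSup (fun i' : Fin (n+1) => ((supNormZ (ω.2 i') : ℝ≥0∞)) ^ 2) (⟨i, hi⟩ : Fin (n+1))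
  · refine iSup_le fun i => ?_
    exact le_iSup₂ (f := fun (i' : ℕ) (_ : i' ∈ Finset.range (n+1)) =>
      ((supNormZ (ω.2 i') : ℝ≥0∞)) ^ 2) i.val (Finset.mem_range.2 i.isLt)

lemma stepIn_eq_ofReal (S : (ZdGraph d).Subgraph) (u v : Fin d → ℤ) :
    stepIn S u v = ENNReal.ofReal (qR S u v) := by
  rw [stepIn, qR]
  split
  · rename_i h
    have h1 : 0 < subDeg S u := one_le_subDeg h
    rw [ENNReal.ofReal_inv_of_pos (by exact_mod_cast h1), ENNReal.ofReal_natCast]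
  · simp

lemma srw_eq_ofReal {n : ℕ} (S : (ZdGraph d).Subgraph) (x : Fin (n+1) → Fin d → ℤ) :
    srwCylIn S 0 n (xe x) = ENNReal.ofReal (wgt S n x) := by
  rw [srwCylIn, wgt, rho_eq_prod_range, xe_zero]
  rcases eq_or_ne (x 0) 0 with h | h
  · rw [if_pos h, if_pos h, one_mul, one_mul]
    rw [ENNReal.ofReal_prod_of_nonneg (fun i _ => qR_nonneg S _ _)]
    exact Finset.prod_congr rfl fun i _ => stepIn_eq_ofReal S _ _
  · rw [if_neg h, if_neg h, zero_mul, zero_mul]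
    simp

lemma natAbs_cast_eq_abs (a : ℤ) : ((a.natAbs : ℕ) : ℝ) = |((a : ℤ) : ℝ)| := by
  rw [Nat.cast_natAbs]
  push_cast
  ring

lemma cSup_le_BB {n : ℕ} (hd : 1 ≤ d) (S : (ZdGraph d).Subgraph)
    {x : Fin (n+1) → Fin d → ℤ} (hx : x ∈ adm d n) :
    cSup x ≤ ENNReal.ofReal (BB S x) := by
  have hne : Nonempty (Fin d) := ⟨⟨0, by omega⟩⟩
  refine iSup_le fun i => ?_
  obtain ⟨j, _, hj⟩ := Finset.exists_mem_eq_sup (Finset.univ : Finset (Fin d))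
    Finset.univ_nonempty (fun j => (x i j).natAbs)
  rw [supNormZ, hj]
  set a := maxR (sA S n x) n with ha
  set b := maxR (sA (translateSub (-(x (Fin.last n))) S) n (revp n x)) n with hb
  have hcb : 2 * |((x i j : ℤ) : ℝ)| ≤ a + 2 * b + 2 := by
    have h1 := coord_bound (S := S) x (mem_adm_x0 hx) (Fin.is_le i) j
    rw [xe_lt x (Fin.is_le i)] at h1
    have h2 : (⟨(i : ℕ), by omega⟩ : Fin (n+1)) = i := Fin.ext rfl
    rw [h2] at h1
    exact h1
  have h3 : (((x i j).natAbs : ℕ) : ℝ≥0∞) ^ 2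
      = ENNReal.ofReal ((((x i j).natAbs : ℕ) : ℝ) ^ 2) := by
    rw [ENNReal.ofReal_pow (Nat.cast_nonneg _), ENNReal.ofReal_natCast]
  rw [h3]
  apply ENNReal.ofReal_le_ofReal
  rw [natAbs_cast_eq_abs]
  have hannn : 0 ≤ a := maxR_nonneg (sA_nonneg S n x) n
  have hbnn : 0 ≤ b := maxR_nonneg (sA_nonneg _ n (revp n x)) n
  have habs : 0 ≤ |((x i j : ℤ) : ℝ)| := abs_nonneg _
  rw [BB, ← ha, ← hb]
  nlinarith

lemma pointwise_sum_bound {n : ℕ} (hd : 1 ≤ d) (S : (ZdGraph d).Subgraph) :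
    (∑' x : Fin (n+1) → Fin d → ℤ, cSup x * originCondCyl d S n (xe x))
      ≤ ENNReal.ofReal (∑ x ∈ pf d n n, (subDeg S 0 : ℝ) * (wgt S n x * BB S x)) := by
  by_cases hD : ∃ b, S.Adj 0 b
  · have horig : ∀ x : Fin (n+1) → Fin d → ℤ,
        originCondCyl d S n (xe x) = ENNReal.ofReal (wgt S n x) := by
      intro x
      rw [originCondCyl, if_pos hD, srw_eq_ofReal]
    have hvan : ∀ x ∉ adm d n, cSup x * originCondCyl d S n (xe x) = 0 := by
      intro x hx
      rw [horig, wgt_eq_zero_of_not_adm hx]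
      simp
    rw [tsum_eq_sum hvan]
    have hdeg : (1:ℝ) ≤ (subDeg S 0 : ℝ) := by
      obtain ⟨b, hb⟩ := hD
      exact_mod_cast one_le_subDeg hb
    calc ∑ x ∈ adm d n, cSup x * originCondCyl d S n (xe x)
        ≤ ∑ x ∈ adm d n, ENNReal.ofReal ((subDeg S 0 : ℝ) * (wgt S n x * BB S x)) := by
          refine Finset.sum_le_sum fun x hx => ?_
          rw [horig]
          calc cSup x * ENNReal.ofReal (wgt S n x)
              ≤ ENNReal.ofReal (BB S x) * ENNReal.ofReal (wgt S n x) :=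
                mul_le_mul_left (cSup_le_BB hd S hx) _
          _ = ENNReal.ofReal (BB S x * wgt S n x) :=
                (ENNReal.ofReal_mul (BB_nonneg S x)).symm
          _ ≤ ENNReal.ofReal ((subDeg S 0 : ℝ) * (wgt S n x * BB S x)) := by
                apply ENNReal.ofReal_le_ofReal
                have hwB : 0 ≤ wgt S n x * BB S x :=
                  mul_nonneg (wgt_nonneg S n x) (BB_nonneg S x)
                nlinarith [mul_nonneg (sub_nonneg.2 hdeg) hwB]
    _ = ENNReal.ofReal (∑ x ∈ adm d n, (subDeg S 0 : ℝ) * (wgt S n x * BB S x)) := by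
          rw [ENNReal.ofReal_sum_of_nonneg]
          intro x _
          exact mul_nonneg (Nat.cast_nonneg _)
            (mul_nonneg (wgt_nonneg S n x) (BB_nonneg S x))
    _ ≤ ENNReal.ofReal (∑ x ∈ pf d n n, (subDeg S 0 : ℝ) * (wgt S n x * BB S x)) := by
          apply ENNReal.ofReal_le_ofReal
          refine Finset.sum_le_sum_of_subset_of_nonneg adm_subset fun x _ _ => ?_
          exact mul_nonneg (Nat.cast_nonneg _)
            (mul_nonneg (wgt_nonneg S n x) (BB_nonneg S x))
  · have hz : ∀ x : Fin (n+1) → Fin d → ℤ, cSup x * originCondCyl d S n (xe x) = 0 := by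
      intro x
      rw [originCondCyl, if_neg hD]
      by_cases hall : ∀ i ≤ n, xe x i = 0
      · have hx0 : x = fun _ => 0 := by
          funext i
          have h1 := hall i.val (Fin.is_le i)
          rw [xe_lt x (Fin.is_le i)] at h1
          have h2 : (⟨(i : ℕ), by omega⟩ : Fin (n+1)) = i := Fin.ext rfl
          rw [h2] at h1
          exact h1
        rw [if_pos hall, mul_one, hx0]
        have : cSup (fun _ : Fin (n+1) => (0 : Fin d → ℤ)) = 0 := by
          rw [cSup]
          refine le_antisymm (iSup_le fun i => ?_) zero_le
          have hs : supNormZ (0 : Fin d → ℤ) = 0 := by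
            rw [supNormZ]
            simp
          rw [hs]
          simp
        rw [this]
      · rw [if_neg hall, mul_zero]
    calc (∑' x : Fin (n+1) → Fin d → ℤ, cSup x * originCondCyl d S n (xe x))
        = ∑' x : Fin (n+1) → Fin d → ℤ, (0:ℝ≥0∞) := tsum_congr hz
    _ = 0 := tsum_zero
    _ ≤ _ := zero_le

lemma A_bound {n : ℕ} (S : (ZdGraph d).Subgraph) :
    ∑ x ∈ pf d n n, (subDeg S 0 : ℝ) * (wgt S n x * (maxR (sA S n x) n)^2)
      ≤ ((unitBox d).card : ℝ) * (16 * (d:ℝ)^2 * n) := by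
  by_cases hD : 1 ≤ subDeg S 0
  · calc ∑ x ∈ pf d n n, (subDeg S 0 : ℝ) * (wgt S n x * (maxR (sA S n x) n)^2)
        = (subDeg S 0 : ℝ) * ∑ x ∈ pf d n n, wgt S n x * (maxR (sA S n x) n)^2 := by
          rw [Finset.mul_sum]
    _ ≤ ((unitBox d).card : ℝ) * (16 * (d:ℝ)^2 * n) := by
        have h1 := quenched_doob (n := n) hD
        have h2 : (subDeg S 0 : ℝ) ≤ ((unitBox d).card : ℝ) := by
          exact_mod_cast subDeg_le_card S 0
        have h3 : 0 ≤ ∑ x ∈ pf d n n, wgt S n x * (maxR (sA S n x) n)^2 :=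
          Finset.sum_nonneg fun x _ => mul_nonneg (wgt_nonneg _ _ _) (sq_nonneg _)
        have h4 : (0:ℝ) ≤ (subDeg S 0 : ℝ) := Nat.cast_nonneg _
        nlinarith
  · have h0 : subDeg S 0 = 0 := by omega
    rw [h0]
    simp only [Nat.cast_zero, zero_mul]
    rw [Finset.sum_const_zero]
    positivity

lemma E_bound {n : ℕ} (hn : 1 ≤ n) (S : (ZdGraph d).Subgraph) :
    ∑ x ∈ pf d n n, (subDeg S 0 : ℝ) * wgt S n x ≤ ((unitBox d).card : ℝ) := by
  by_cases hD : 1 ≤ subDeg S 0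
  · calc ∑ x ∈ pf d n n, (subDeg S 0 : ℝ) * wgt S n x
        = (subDeg S 0 : ℝ) * ∑ x ∈ pf d n n, wgt S n x := by rw [Finset.mul_sum]
    _ = (subDeg S 0 : ℝ) := by rw [sum_wgt hD n le_rfl, mul_one]
    _ ≤ ((unitBox d).card : ℝ) := by exact_mod_cast subDeg_le_card S 0
  · have h0 : subDeg S 0 = 0 := by omega
    rw [h0]
    simp only [Nat.cast_zero, zero_mul]
    rw [Finset.sum_const_zero]
    positivity

/-! ### annealed quantities -/

def Asum (n : ℕ) (S : (ZdGraph d).Subgraph) : ℝ :=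
  ∑ x ∈ pf d n n, (subDeg S 0 : ℝ) * (wgt S n x * (maxR (sA S n x) n)^2)

def Bsum (n : ℕ) (S : (ZdGraph d).Subgraph) : ℝ :=
  ∑ x ∈ pf d n n, (subDeg S 0 : ℝ) * (wgt S n x
    * (maxR (sA (translateSub (-(x (Fin.last n))) S) n (revp n x)) n)^2)

def Esum (n : ℕ) (S : (ZdGraph d).Subgraph) : ℝ :=
  ∑ x ∈ pf d n n, (subDeg S 0 : ℝ) * wgt S n x

lemma measurable_Afun (n : ℕ) (y : Fin (n+1) → Fin d → ℤ) :
    Measurable fun S : (ZdGraph d).Subgraph =>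
      ENNReal.ofReal ((subDeg S 0 : ℝ) * (wgt S n y * (maxR (sA S n y) n)^2)) := by
  apply ENNReal.measurable_ofReal.comp
  apply Measurable.mul (measurable_subDegR 0)
  apply Measurable.mul (measurable_wgt n y)
  exact (measurable_maxR (fun k => measurable_sA n y k) n).pow_const 2

lemma measurable_Bfun (n : ℕ) (x : Fin (n+1) → Fin d → ℤ) :
    Measurable fun S : (ZdGraph d).Subgraph =>
      ENNReal.ofReal ((subDeg S 0 : ℝ) * (wgt S n x
        * (maxR (sA (translateSub (-(x (Fin.last n))) S) n (revp n x)) n)^2)) := by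
  apply ENNReal.measurable_ofReal.comp
  apply Measurable.mul (measurable_subDegR 0)
  apply Measurable.mul (measurable_wgt n x)
  have h : Measurable fun S : (ZdGraph d).Subgraph =>
      maxR (sA (translateSub (-(x (Fin.last n))) S) n (revp n x)) n :=
    (measurable_maxR (fun k => measurable_sA n (revp n x) k) n).comp
      (measurable_translateSub _)
  exact h.pow_const 2

lemma B_transfer {n : ℕ} (P : Measure (ZdGraph d).Subgraph)
    (hTI : ∀ t : Fin d → ℤ, P.map (translateSub t) = P)
    {x : Fin (n+1) → Fin d → ℤ} (hx0 : x 0 = 0) :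
    (∫⁻ S, ENNReal.ofReal ((subDeg S 0 : ℝ) * (wgt S n x
        * (maxR (sA (translateSub (-(x (Fin.last n))) S) n (revp n x)) n)^2)) ∂P)
      = ∫⁻ S, ENNReal.ofReal ((subDeg S 0 : ℝ) * (wgt S n (revp n x)
        * (maxR (sA S n (revp n x)) n)^2)) ∂P := by
  have hpt : ∀ S : (ZdGraph d).Subgraph,
      ENNReal.ofReal ((subDeg S 0 : ℝ) * (wgt S n x
        * (maxR (sA (translateSub (-(x (Fin.last n))) S) n (revp n x)) n)^2))
      = (fun S' => ENNReal.ofReal ((subDeg S' 0 : ℝ) * (wgt S' n (revp n x)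
          * (maxR (sA S' n (revp n x)) n)^2))) (translateSub (-(x (Fin.last n))) S) := by
    intro S
    have hrv := deg_wgt_rev (S := S) x hx0
    congr 1
    set M := maxR (sA (translateSub (-(x (Fin.last n))) S) n (revp n x)) n with hM
    calc (subDeg S 0 : ℝ) * (wgt S n x * M^2)
        = ((subDeg S 0 : ℝ) * wgt S n x) * M^2 := by ring
    _ = ((subDeg (translateSub (-(x (Fin.last n))) S) 0 : ℝ)
          * wgt (translateSub (-(x (Fin.last n))) S) n (revp n x)) * M^2 := by rw [hrv]
    _ = _ := by ring
  rw [lintegral_congr hpt,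
    ← lintegral_map (measurable_Afun n (revp n x)) (measurable_translateSub _), hTI]

lemma lint_zero_off_adm {n : ℕ} (P : Measure (ZdGraph d).Subgraph)
    {x : Fin (n+1) → Fin d → ℤ} (hx : x ∉ adm d n) (g : (ZdGraph d).Subgraph → ℝ) :
    (∫⁻ S, ENNReal.ofReal ((subDeg S 0 : ℝ) * (wgt S n x * g S)) ∂P) = 0 := by
  have h : ∀ S : (ZdGraph d).Subgraph,
      ENNReal.ofReal ((subDeg S 0 : ℝ) * (wgt S n x * g S)) = 0 := by
    intro S
    rw [wgt_eq_zero_of_not_adm hx]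
    simp
  rw [lintegral_congr h, lintegral_zero]

lemma B_eq_A {n : ℕ} (P : Measure (ZdGraph d).Subgraph)
    (hTI : ∀ t : Fin d → ℤ, P.map (translateSub t) = P) :
    (∫⁻ S, ENNReal.ofReal (Bsum n S) ∂P) = ∫⁻ S, ENNReal.ofReal (Asum n S) ∂P := by
  have hofB : ∀ S : (ZdGraph d).Subgraph, ENNReal.ofReal (Bsum n S)
      = ∑ x ∈ pf d n n, ENNReal.ofReal ((subDeg S 0 : ℝ) * (wgt S n x
        * (maxR (sA (translateSub (-(x (Fin.last n))) S) n (revp n x)) n)^2)) := by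
    intro S
    rw [Bsum, ENNReal.ofReal_sum_of_nonneg]
    intro x _
    exact mul_nonneg (Nat.cast_nonneg _) (mul_nonneg (wgt_nonneg _ _ _) (sq_nonneg _))
  have hofA : ∀ S : (ZdGraph d).Subgraph, ENNReal.ofReal (Asum n S)
      = ∑ x ∈ pf d n n, ENNReal.ofReal ((subDeg S 0 : ℝ) * (wgt S n x
        * (maxR (sA S n x) n)^2)) := by
    intro S
    rw [Asum, ENNReal.ofReal_sum_of_nonneg]
    intro x _
    exact mul_nonneg (Nat.cast_nonneg _) (mul_nonneg (wgt_nonneg _ _ _) (sq_nonneg _))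
  calc (∫⁻ S, ENNReal.ofReal (Bsum n S) ∂P)
      = ∑ x ∈ pf d n n, ∫⁻ S, ENNReal.ofReal ((subDeg S 0 : ℝ) * (wgt S n x
          * (maxR (sA (translateSub (-(x (Fin.last n))) S) n (revp n x)) n)^2)) ∂P := by
        rw [lintegral_congr hofB]
        exact lintegral_finset_sum _ fun x _ => measurable_Bfun n x
  _ = ∑ x ∈ adm d n, ∫⁻ S, ENNReal.ofReal ((subDeg S 0 : ℝ) * (wgt S n x
          * (maxR (sA (translateSub (-(x (Fin.last n))) S) n (revp n x)) n)^2)) ∂P := by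
        refine (Finset.sum_subset adm_subset fun x _ hx => ?_).symm
        exact lint_zero_off_adm P hx _
  _ = ∑ x ∈ adm d n, ∫⁻ S, ENNReal.ofReal ((subDeg S 0 : ℝ) * (wgt S n (revp n x)
          * (maxR (sA S n (revp n x)) n)^2)) ∂P := by
        refine Finset.sum_congr rfl fun x hx => ?_
        exact B_transfer P hTI (mem_adm_x0 hx)
  _ = ∑ y ∈ adm d n, ∫⁻ S, ENNReal.ofReal ((subDeg S 0 : ℝ) * (wgt S n y
          * (maxR (sA S n y) n)^2)) ∂P := by
        refine Finset.sum_nbij' (i := fun x => revp n x) (j := fun y => revp n y)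
          ?_ ?_ ?_ ?_ ?_
        · intro x hx
          exact revp_mem_adm hx
        · intro y hy
          exact revp_mem_adm hy
        · intro x hx
          exact revp_revp (mem_adm_x0 hx)
        · intro y hy
          exact revp_revp (mem_adm_x0 hy)
        · intro x _
          rfl
  _ = ∑ y ∈ pf d n n, ∫⁻ S, ENNReal.ofReal ((subDeg S 0 : ℝ) * (wgt S n y
          * (maxR (sA S n y) n)^2)) ∂P := by
        refine Finset.sum_subset adm_subset fun y _ hy => ?_
        exact lint_zero_off_adm P hy _
  _ = ∫⁻ S, ENNReal.ofReal (Asum n S) ∂P := by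
        rw [lintegral_congr hofA]
        exact (lintegral_finset_sum _ fun y _ => measurable_Afun n y).symm

lemma bridge {n : ℕ} (P : Measure (ZdGraph d).Subgraph)
    (μ : Measure ((ZdGraph d).Subgraph × (ℕ → Fin d → ℤ))) (hμ : IsEnvWalkLaw d P μ) :
    (∫⁻ ω, (⨆ i ∈ Finset.range (n + 1), ((supNormZ (ω.2 i) : ℝ≥0∞)) ^ 2) ∂μ)
      = ∑' x : Fin (n+1) → Fin d → ℤ, cSup x * ∫⁻ S, originCondCyl d S n (xe x) ∂P := by
  have hpt : ∀ ω : (ZdGraph d).Subgraph × (ℕ → Fin d → ℤ),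
      (⨆ i ∈ Finset.range (n + 1), ((supNormZ (ω.2 i) : ℝ≥0∞)) ^ 2)
        = ∑' x : Fin (n+1) → Fin d → ℤ,
            Set.indicator {ω' : (ZdGraph d).Subgraph × (ℕ → Fin d → ℤ) |
              ∀ i ≤ n, ω'.2 i = xe x i} (fun _ => cSup x) ω := by
    intro ω
    have hone : ∀ x, x ≠ (fun i : Fin (n+1) => ω.2 i) →
        Set.indicator {ω' : (ZdGraph d).Subgraph × (ℕ → Fin d → ℤ) |
          ∀ i ≤ n, ω'.2 i = xe x i} (fun _ => cSup x) ω = 0 := by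
      intro x hx
      rw [Set.indicator_of_notMem]
      intro hmem
      apply hx
      funext i
      have h1 := hmem i.val (Fin.is_le i)
      rw [xe_lt x (Fin.is_le i)] at h1
      have h2 : (⟨(i:ℕ), by omega⟩ : Fin (n+1)) = i := Fin.ext rfl
      rw [h2] at h1
      exact h1.symm
    rw [tsum_eq_single _ hone, Set.indicator_of_mem]
    · exact sup_eq_cSup ω
    · intro i hi
      rw [xe_lt _ hi]
  calc ∫⁻ ω, (⨆ i ∈ Finset.range (n + 1), ((supNormZ (ω.2 i) : ℝ≥0∞)) ^ 2) ∂μ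
      = ∫⁻ ω, ∑' x : Fin (n+1) → Fin d → ℤ,
          Set.indicator {ω' : (ZdGraph d).Subgraph × (ℕ → Fin d → ℤ) |
            ∀ i ≤ n, ω'.2 i = xe x i} (fun _ => cSup x) ω ∂μ :=
        lintegral_congr hpt
  _ = ∑' x : Fin (n+1) → Fin d → ℤ, ∫⁻ ω,
        Set.indicator {ω' : (ZdGraph d).Subgraph × (ℕ → Fin d → ℤ) |
          ∀ i ≤ n, ω'.2 i = xe x i} (fun _ => cSup x) ω ∂μ :=
        lintegral_tsum fun x =>
          (measurable_const.indicator (measurableSet_cylZ n (xe x))).aemeasurable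
  _ = ∑' x : Fin (n+1) → Fin d → ℤ, cSup x
        * μ {ω' : (ZdGraph d).Subgraph × (ℕ → Fin d → ℤ) | ∀ i ≤ n, ω'.2 i = xe x i} := by
        refine tsum_congr fun x => ?_
        rw [lintegral_indicator_const (measurableSet_cylZ n (xe x))]
  _ = ∑' x : Fin (n+1) → Fin d → ℤ, cSup x * ∫⁻ S, originCondCyl d S n (xe x) ∂P := by
        refine tsum_congr fun x => ?_
        congr 1
        have hset : {ω' : (ZdGraph d).Subgraph × (ℕ → Fin d → ℤ) | ∀ i ≤ n, ω'.2 i = xe x i}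
            = Set.univ ×ˢ {y : ℕ → Fin d → ℤ | ∀ i ≤ n, y i = xe x i} := by
          ext ω'
          simp [Set.mem_prod]
        rw [hset, hμ.2.2 Set.univ MeasurableSet.univ n (xe x), Measure.restrict_univ]

end Aux

/-- Proposition 4.6: diffusive maximal displacement bound. For every
`d ≥ 1` there is a constant `C(d) < ∞` such that for every translation-invariant random
subgraph `ω` of `ℤ^d` and the walk `Y` which, conditionally on `ω`, is a simple random walk
started at the origin on the component of the origin (frozen at the origin if the origin
has no `ω`-neighbour), one has `E[max_{0 ≤ i ≤ n} ‖Y_i‖_∞²] ≤ C(d)·n` for all `n ≥ 1`. -/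
theorem maximal_displacement_diffusive_bound
    (d : ℕ) (hd : 1 ≤ d) :
    ∃ C : ℝ≥0∞, C ≠ ⊤ ∧
      ∀ P : Measure (ZdGraph d).Subgraph, IsProbabilityMeasure P →
        (∀ t : Fin d → ℤ, P.map (translateSub t) = P) →
        ∀ μ : Measure ((ZdGraph d).Subgraph × (ℕ → Fin d → ℤ)), IsEnvWalkLaw d P μ →
          ∀ n : ℕ, 1 ≤ n →
            (∫⁻ ω, (⨆ i ∈ Finset.range (n + 1), ((supNormZ (ω.2 i) : ℝ≥0∞)) ^ 2) ∂μ)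
              ≤ C * n := by
  classical
  refine ⟨ENNReal.ofReal (240 * ((unitBox d).card : ℝ) * (d:ℝ)^2
      + 24 * ((unitBox d).card : ℝ)), ENNReal.ofReal_ne_top, ?_⟩
  intro P hP hTI μ hμ n hn
  haveI := hP
  set K : ℝ := ((unitBox d).card : ℝ) with hK
  have hK0 : (0:ℝ) ≤ K := Nat.cast_nonneg _
  rw [bridge P μ hμ]
  have hswap : (∑' x : Fin (n+1) → Fin d → ℤ, cSup x * ∫⁻ S, originCondCyl d S n (xe x) ∂P)
      = ∫⁻ S, (∑' x : Fin (n+1) → Fin d → ℤ, cSup x * originCondCyl d S n (xe x)) ∂P := by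
    calc (∑' x : Fin (n+1) → Fin d → ℤ, cSup x * ∫⁻ S, originCondCyl d S n (xe x) ∂P)
        = ∑' x : Fin (n+1) → Fin d → ℤ, ∫⁻ S, cSup x * originCondCyl d S n (xe x) ∂P := by
          refine tsum_congr fun x => ?_
          rw [lintegral_const_mul _ (measurable_originCondCyl n (xe x))]
    _ = ∫⁻ S, (∑' x : Fin (n+1) → Fin d → ℤ, cSup x * originCondCyl d S n (xe x)) ∂P :=
          (lintegral_tsum fun x =>
            ((measurable_originCondCyl n (xe x)).const_mul _).aemeasurable).symm
  rw [hswap]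
  have hsplit : ∀ S : (ZdGraph d).Subgraph,
      (∑' x : Fin (n+1) → Fin d → ℤ, cSup x * originCondCyl d S n (xe x))
        ≤ ENNReal.ofReal (3 * Asum n S) + ENNReal.ofReal (12 * Bsum n S)
          + ENNReal.ofReal (12 * Esum n S) := by
    intro S
    refine le_trans (pointwise_sum_bound hd S) ?_
    have hbound : (∑ x ∈ pf d n n, (subDeg S 0 : ℝ) * (wgt S n x * BB S x))
        ≤ 3 * Asum n S + 12 * Bsum n S + 12 * Esum n S := by
      rw [Asum, Bsum, Esum, Finset.mul_sum, Finset.mul_sum, Finset.mul_sum,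
        ← Finset.sum_add_distrib, ← Finset.sum_add_distrib]
      refine Finset.sum_le_sum fun x _ => ?_
      set a := maxR (sA S n x) n with ha'
      set b := maxR (sA (translateSub (-(x (Fin.last n))) S) n (revp n x)) n with hb'
      have ha := maxR_nonneg (sA_nonneg S n x) n
      have hb := maxR_nonneg
        (sA_nonneg (translateSub (-(x (Fin.last n))) S) n (revp n x)) n
      have hc : (0:ℝ) ≤ (subDeg S 0 : ℝ) * wgt S n x :=
        mul_nonneg (Nat.cast_nonneg _) (wgt_nonneg _ _ _)
      have key : (a + 2*b + 2)^2 ≤ 3*a^2 + 12*b^2 + 12 := by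
        nlinarith [sq_nonneg (a - 2*b), sq_nonneg (a - 2), sq_nonneg (2*b - 2)]
      have hmul := mul_le_mul_of_nonneg_left key hc
      rw [BB, ← ha', ← hb']
      nlinarith [hmul]
    calc ENNReal.ofReal (∑ x ∈ pf d n n, (subDeg S 0 : ℝ) * (wgt S n x * BB S x))
        ≤ ENNReal.ofReal (3 * Asum n S + 12 * Bsum n S + 12 * Esum n S) :=
          ENNReal.ofReal_le_ofReal hbound
    _ ≤ _ := le_trans ENNReal.ofReal_add_le (add_le_add ENNReal.ofReal_add_le le_rfl)
  have hAnn : ∀ S : (ZdGraph d).Subgraph, 0 ≤ Asum n S := fun S =>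
    Finset.sum_nonneg fun x _ => mul_nonneg (Nat.cast_nonneg _)
      (mul_nonneg (wgt_nonneg _ _ _) (sq_nonneg _))
  have hBnn : ∀ S : (ZdGraph d).Subgraph, 0 ≤ Bsum n S := fun S =>
    Finset.sum_nonneg fun x _ => mul_nonneg (Nat.cast_nonneg _)
      (mul_nonneg (wgt_nonneg _ _ _) (sq_nonneg _))
  have hEnn : ∀ S : (ZdGraph d).Subgraph, 0 ≤ Esum n S := fun S =>
    Finset.sum_nonneg fun x _ => mul_nonneg (Nat.cast_nonneg _) (wgt_nonneg _ _ _)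
  have hmA : Measurable fun S : (ZdGraph d).Subgraph => ENNReal.ofReal (Asum n S) := by
    apply ENNReal.measurable_ofReal.comp
    exact Finset.measurable_sum _ fun x _ => (measurable_subDegR 0).mul
      ((measurable_wgt n x).mul ((measurable_maxR (fun k => measurable_sA n x k) n).pow_const 2))
  have hmB : Measurable fun S : (ZdGraph d).Subgraph => ENNReal.ofReal (Bsum n S) := by
    apply ENNReal.measurable_ofReal.comp
    refine Finset.measurable_sum _ fun x _ => (measurable_subDegR 0).mul
      ((measurable_wgt n x).mul (Measurable.pow_const ?_ 2))
    exact (measurable_maxR (fun k => measurable_sA n (revp n x) k) n).comp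
      (measurable_translateSub _)
  have hmE : Measurable fun S : (ZdGraph d).Subgraph => ENNReal.ofReal (Esum n S) := by
    apply ENNReal.measurable_ofReal.comp
    exact Finset.measurable_sum _ fun x _ => (measurable_subDegR 0).mul (measurable_wgt n x)
  have hofmul : ∀ (c : ℝ) (hc : (0:ℝ) ≤ c) (r : ℝ), ENNReal.ofReal (c * r)
      = ENNReal.ofReal c * ENNReal.ofReal r := fun c hc r => ENNReal.ofReal_mul hc
  calc (∫⁻ S, (∑' x : Fin (n+1) → Fin d → ℤ, cSup x * originCondCyl d S n (xe x)) ∂P)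
      ≤ ∫⁻ S, ((3:ℝ≥0∞) * ENNReal.ofReal (Asum n S) + 12 * ENNReal.ofReal (Bsum n S)
          + 12 * ENNReal.ofReal (Esum n S)) ∂P := by
        apply lintegral_mono
        intro S
        refine le_trans (hsplit S) ?_
        rw [hofmul 3 (by norm_num) (Asum n S), hofmul 12 (by norm_num) (Bsum n S),
          hofmul 12 (by norm_num) (Esum n S), ENNReal.ofReal_ofNat, ENNReal.ofReal_ofNat]
  _ = 3 * (∫⁻ S, ENNReal.ofReal (Asum n S) ∂P) + 12 * (∫⁻ S, ENNReal.ofReal (Bsum n S) ∂P)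
        + 12 * (∫⁻ S, ENNReal.ofReal (Esum n S) ∂P) := by
      rw [lintegral_add_left (f := fun S => 3 * ENNReal.ofReal (Asum n S) + 12 * ENNReal.ofReal (Bsum n S)) ((hmA.const_mul 3).add (hmB.const_mul 12)),
        lintegral_add_left (hmA.const_mul 3), lintegral_const_mul 3 hmA,
        lintegral_const_mul 12 hmB, lintegral_const_mul 12 hmE]
  _ ≤ 3 * ENNReal.ofReal (K * (16 * (d:ℝ)^2 * (n:ℝ)))
        + 12 * ENNReal.ofReal (K * (16 * (d:ℝ)^2 * (n:ℝ))) + 12 * ENNReal.ofReal K := by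
      have hIA : (∫⁻ S, ENNReal.ofReal (Asum n S) ∂P)
          ≤ ENNReal.ofReal (K * (16 * (d:ℝ)^2 * (n:ℝ))) := by
        calc (∫⁻ S, ENNReal.ofReal (Asum n S) ∂P)
            ≤ ∫⁻ _, ENNReal.ofReal (K * (16 * (d:ℝ)^2 * (n:ℝ))) ∂P :=
              lintegral_mono fun S => ENNReal.ofReal_le_ofReal (A_bound S)
        _ = ENNReal.ofReal (K * (16 * (d:ℝ)^2 * (n:ℝ))) := by
              rw [lintegral_const, measure_univ, mul_one]
      have hIB : (∫⁻ S, ENNReal.ofReal (Bsum n S) ∂P)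
          ≤ ENNReal.ofReal (K * (16 * (d:ℝ)^2 * (n:ℝ))) := by
        rw [B_eq_A P hTI]
        exact hIA
      have hIE : (∫⁻ S, ENNReal.ofReal (Esum n S) ∂P) ≤ ENNReal.ofReal K := by
        calc (∫⁻ S, ENNReal.ofReal (Esum n S) ∂P)
            ≤ ∫⁻ _, ENNReal.ofReal K ∂P :=
              lintegral_mono fun S => ENNReal.ofReal_le_ofReal (E_bound hn S)
        _ = ENNReal.ofReal K := by rw [lintegral_const, measure_univ, mul_one]
      exact add_le_add (add_le_add (mul_le_mul_right hIA _) (mul_le_mul_right hIB _))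
        (mul_le_mul_right hIE _)
  _ ≤ ENNReal.ofReal (240 * K * (d:ℝ)^2 + 24 * K) * (n : ℝ≥0∞) := by
      have hc1 : (0:ℝ) ≤ K * (16 * (d:ℝ)^2 * (n:ℝ)) := by positivity
      have e3 : (3:ℝ≥0∞) * ENNReal.ofReal (K * (16 * (d:ℝ)^2 * (n:ℝ)))
          = ENNReal.ofReal (3 * (K * (16 * (d:ℝ)^2 * (n:ℝ)))) := by
        rw [ENNReal.ofReal_mul (by norm_num : (0:ℝ) ≤ 3), ENNReal.ofReal_ofNat]
      have e12 : (12:ℝ≥0∞) * ENNReal.ofReal (K * (16 * (d:ℝ)^2 * (n:ℝ)))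
          = ENNReal.ofReal (12 * (K * (16 * (d:ℝ)^2 * (n:ℝ)))) := by
        rw [ENNReal.ofReal_mul (by norm_num : (0:ℝ) ≤ 12), ENNReal.ofReal_ofNat]
      have e12' : (12:ℝ≥0∞) * ENNReal.ofReal K = ENNReal.ofReal (12 * K) := by
        rw [ENNReal.ofReal_mul (by norm_num : (0:ℝ) ≤ 12), ENNReal.ofReal_ofNat]
      rw [e3, e12, e12', ← ENNReal.ofReal_add (by positivity) (by positivity),
        ← ENNReal.ofReal_add (by positivity) (by positivity)]
      have hcast : (n : ℝ≥0∞) = ENNReal.ofReal ((n:ℝ)) := (ENNReal.ofReal_natCast n).symm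
      rw [hcast, ← ENNReal.ofReal_mul (by positivity)]
      apply ENNReal.ofReal_le_ofReal
      have hn1 : (1:ℝ) ≤ (n:ℝ) := by exact_mod_cast hn
      nlinarith [mul_nonneg hK0 (sub_nonneg.2 hn1), sq_nonneg (d:ℝ), hK0]

end ArborealGas

end
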